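/- arXiv:1307.0964 — 9 statements merged into one kernel-verified Lean document; each statement's English description precedes it below -/
import Mathlib

section
/- Let n ≥ 2 and let A be an n×n real matrix with nonnegative entries, spectral radius r(A) = 1, and a_{11} = 0. Then the spread of A satisfies s(A) ≥ 1/n. -/
open Matrix Polynomial

/-- The eigenvalues of a real square matrix: the multiset of roots (with multiplicity)
of its characteristic polynomial over `ℂ`. -/
noncomputable def eigs {n : ℕ} (A : Matrix (Fin n) (Fin n) ℝ) : Multiset ℂ :=
  ((A.map Complex.ofReal).charpoly).roots

/-- The spectral radius: the maximum of `|λ|` over the eigenvalues `λ`. -/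
noncomputable def specRad {n : ℕ} (A : Matrix (Fin n) (Fin n) ℝ) : ℝ :=
  sSup {r : ℝ | ∃ μ ∈ eigs A, r = ‖μ‖}

/-- The spread: the maximum of `|λ - μ|` over pairs of eigenvalues `λ, μ`. -/
noncomputable def spread {n : ℕ} (A : Matrix (Fin n) (Fin n) ℝ) : ℝ :=
  sSup {r : ℝ | ∃ μ ∈ eigs A, ∃ ν ∈ eigs A, r = ‖μ - ν‖}

lemma eval_charpoly' {m : ℕ} (M : Matrix (Fin m) (Fin m) ℂ) (y : ℂ) :
    M.charpoly.eval y = (y • (1 : Matrix (Fin m) (Fin m) ℂ) - M).det := by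
  unfold Matrix.charpoly
  rw [← Polynomial.coe_evalRingHom, RingHom.map_det]
  congr 1
  ext i j
  by_cases h : i = j
  · subst h
    simp [charmatrix_apply_eq, Matrix.sub_apply, Matrix.smul_apply, Matrix.one_apply]
  · simp [charmatrix_apply_ne _ _ _ h, Matrix.sub_apply, Matrix.smul_apply, Matrix.one_apply_ne h]

lemma card_roots_charpoly' {m : ℕ} (M : Matrix (Fin m) (Fin m) ℂ) :
    M.charpoly.roots.card = m := by
  rw [(Polynomial.splits_iff_card_roots).mp (IsAlgClosed.splits M.charpoly)]
  simp

lemma roots_charpoly_sq {m : ℕ} (M : Matrix (Fin m) (Fin m) ℂ) :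
    (M * M).charpoly.roots = M.charpoly.roots.map (fun z => z * z) := by
  have hM : M.charpoly = (M.charpoly.roots.map (fun a => X - C a)).prod :=
    (IsAlgClosed.splits M.charpoly).eq_prod_roots_of_monic M.charpoly_monic
  have key : (M * M).charpoly = ((M.charpoly.roots.map (fun a => a * a)).map
      (fun b => X - C b)).prod := by
    refine Polynomial.funext fun y => ?_
    obtain ⟨x, hx⟩ := IsAlgClosed.exists_pow_nat_eq y (n := 2) (by norm_num)
    have factor : y • (1 : Matrix (Fin m) (Fin m) ℂ) - M * M
        = (x • 1 - M) * (x • 1 + M) := by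
      rw [sub_mul, mul_add, mul_add, smul_mul_assoc, smul_mul_assoc, one_mul,
        mul_smul_comm, mul_one, ← hx, pow_two, ← smul_smul]
      simp only [one_mul]
      abel
    have h1 : (x • (1 : Matrix (Fin m) (Fin m) ℂ) - M).det
        = (M.charpoly.roots.map (fun a => x - a)).prod := by
      rw [← eval_charpoly']
      conv_lhs => rw [hM]
      rw [eval_multiset_prod, Multiset.map_map]
      simp
    have hc : M.charpoly.roots.card = m := card_roots_charpoly' M
    have hev : eval (-x) M.charpoly = (M.charpoly.roots.map (fun a => -x - a)).prod := by
      conv_lhs => rw [hM]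
      rw [eval_multiset_prod, Multiset.map_map]
      simp
    have h2 : (x • (1 : Matrix (Fin m) (Fin m) ℂ) + M).det
        = (M.charpoly.roots.map (fun a => x + a)).prod := by
      have hrw : x • (1 : Matrix (Fin m) (Fin m) ℂ) + M
          = (-1 : ℂ) • ((-x) • (1 : Matrix (Fin m) (Fin m) ℂ) - M) := by
        rw [smul_sub, smul_smul]
        simp
      rw [hrw, Matrix.det_smul, ← eval_charpoly', Fintype.card_fin, hev]
      have : (M.charpoly.roots.map (fun a => x + a)).prod
          = (M.charpoly.roots.map (fun a => (-1 : ℂ) * (-x - a))).prod := by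
        congr 1
        apply Multiset.map_congr rfl
        intro a _
        ring
      rw [this, Multiset.prod_map_mul]
      congr 1
      rw [Multiset.map_const', Multiset.prod_replicate, hc]
    calc eval y (M * M).charpoly = (y • (1 : Matrix (Fin m) (Fin m) ℂ) - M * M).det :=
          eval_charpoly' _ y
      _ = (x • 1 - M).det * (x • 1 + M).det := by rw [factor, Matrix.det_mul]
      _ = (M.charpoly.roots.map (fun a => (x - a) * (x + a))).prod := by
          rw [h1, h2, ← Multiset.prod_map_mul]
      _ = (M.charpoly.roots.map (fun a => y - a * a)).prod := by
          congr 1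
          apply Multiset.map_congr rfl
          intro a _
          rw [← hx]
          ring
      _ = eval y (((M.charpoly.roots.map (fun a => a * a)).map (fun b => X - C b)).prod) := by
          rw [eval_multiset_prod, Multiset.map_map, Multiset.map_map]
          simp
  rw [key, roots_multiset_prod_X_sub_C]

lemma msum_sub (R : Multiset ℂ) (c : ℂ) :
    (R.map (fun z => z - c)).sum = R.sum - R.card • c := by
  induction R using Multiset.induction with
  | empty => simp
  | cons a s ih =>
    simp only [Multiset.map_cons, Multiset.sum_cons, Multiset.card_cons, ih, succ_nsmul]
    ring

theorem spread_ge_one_div_n (n : ℕ) (hn : 2 ≤ n) (A : Matrix (Fin n) (Fin n) ℝ)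
    (hA : ∀ i j, 0 ≤ A i j) (hr : specRad A = 1)
    (h11 : A ⟨0, by omega⟩ ⟨0, by omega⟩ = 0) :
    (1 : ℝ) / n ≤ spread A := by
  set R : Multiset ℂ := eigs A with hRdef
  have hnpos : (0 : ℝ) < n := by positivity
  -- map commutes with multiplication and trace
  have hmapmul : ∀ (M N : Matrix (Fin n) (Fin n) ℝ),
      (M * N).map Complex.ofReal = M.map Complex.ofReal * N.map Complex.ofReal := by
    intro M N
    ext i j
    simp only [Matrix.map_apply, Matrix.mul_apply]
    push_cast
    rfl
  have htrace : ∀ (M : Matrix (Fin n) (Fin n) ℝ),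
      (M.map Complex.ofReal).trace = ((M.trace : ℝ) : ℂ) := by
    intro M
    simp only [Matrix.trace, Matrix.diag, Matrix.map_apply]
    push_cast
    rfl
  -- iterated squaring
  have key : ∀ m : ℕ, (∀ i j, 0 ≤ (A ^ (2 ^ m)) i j)
      ∧ (∀ i, (A i i) ^ (2 ^ m) ≤ (A ^ (2 ^ m)) i i)
      ∧ ((A ^ (2 ^ m)).map Complex.ofReal).charpoly.roots
          = R.map (fun z => z ^ (2 ^ m)) := by
    intro m
    induction m with
    | zero =>
      refine ⟨?_, ?_, ?_⟩
      · simpa using hA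
      · intro i; simp
      · simp [hRdef, eigs]
    | succ m ih =>
      obtain ⟨hpos, hdiag, hroots⟩ := ih
      have h2 : A ^ (2 ^ (m + 1)) = A ^ (2 ^ m) * A ^ (2 ^ m) := by
        rw [← pow_add]
        congr 1
        rw [pow_succ]
        ring
      refine ⟨?_, ?_, ?_⟩
      · intro i j
        rw [h2, Matrix.mul_apply]
        exact Finset.sum_nonneg fun k _ => mul_nonneg (hpos i k) (hpos k j)
      · intro i
        rw [h2, Matrix.mul_apply]
        calc (A i i) ^ (2 ^ (m + 1)) = ((A i i) ^ (2 ^ m)) ^ 2 := by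
              rw [← pow_mul, pow_succ]
          _ ≤ ((A ^ (2 ^ m)) i i) ^ 2 :=
              pow_le_pow_left₀ (pow_nonneg (hA i i) _) (hdiag i) 2
          _ = (A ^ (2 ^ m)) i i * (A ^ (2 ^ m)) i i := sq ((A ^ (2 ^ m)) i i)
          _ ≤ ∑ k, (A ^ (2 ^ m)) i k * (A ^ (2 ^ m)) k i := by
              exact Finset.single_le_sum (f := fun k => (A ^ (2 ^ m)) i k * (A ^ (2 ^ m)) k i)
                (fun k _ => mul_nonneg (hpos i k) (hpos k i)) (Finset.mem_univ i)
      · rw [h2, hmapmul, roots_charpoly_sq, hroots, Multiset.map_map]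
        apply Multiset.map_congr rfl
        intro z _
        simp only [Function.comp_apply]
        rw [← pow_add]
        congr 1
        rw [pow_succ]
        ring
  -- cardinality and sum of eigenvalues
  have hcardR : R.card = n := card_roots_charpoly' _
  have hRsum : R.sum = ((A.trace : ℝ) : ℂ) := by
    rw [hRdef]
    show ((A.map Complex.ofReal).charpoly).roots.sum = _
    rw [← Matrix.trace_eq_sum_roots_charpoly, htrace]
  -- spectral radius facts
  have hsetfin : {r : ℝ | ∃ μ ∈ eigs A, r = ‖μ‖}.Finite := by
    have heq : {r : ℝ | ∃ μ ∈ eigs A, r = ‖μ‖}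
        = (fun z : ℂ => ‖z‖) '' ((eigs A).toFinset : Set ℂ) := by
      ext r
      simp only [Set.mem_setOf_eq, Set.mem_image, Finset.coe_sort_coe, Multiset.mem_toFinset,
        Finset.mem_coe]
      constructor
      · rintro ⟨μ, hμ, rfl⟩; exact ⟨μ, hμ, rfl⟩
      · rintro ⟨μ, hμ, rfl⟩; exact ⟨μ, hμ, rfl⟩
    rw [heq]
    exact ((eigs A).toFinset.finite_toSet).image _
  have habs_le : ∀ μ ∈ R, ‖μ‖ ≤ 1 := by
    intro μ hμ
    rw [← hr]
    exact le_csSup hsetfin.bddAbove ⟨μ, hμ, rfl⟩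
  have hex : ∃ lam ∈ R, ‖lam‖ = 1 := by
    have hRne : R ≠ 0 := by
      intro h0
      rw [h0] at hcardR
      simp at hcardR
      omega
    obtain ⟨μ, hμ⟩ := Multiset.exists_mem_of_ne_zero hRne
    have hne : {r : ℝ | ∃ μ ∈ eigs A, r = ‖μ‖}.Nonempty :=
      ⟨‖μ‖, μ, hμ, rfl⟩
    have hmem := hne.csSup_mem hsetfin
    have : specRad A ∈ {r : ℝ | ∃ μ ∈ eigs A, r = ‖μ‖} := hmem
    rw [hr] at this
    obtain ⟨lam, hlam, h1⟩ := this
    exact ⟨lam, hlam, h1.symm⟩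
  -- every diagonal entry is at most 1
  have hdiag1 : ∀ i, A i i ≤ 1 := by
    intro i
    by_contra hgt
    push_neg at hgt
    obtain ⟨k, hk⟩ := pow_unbounded_of_one_lt (n : ℝ) hgt
    have h1 : (A i i) ^ (2 ^ k) ≤ (n : ℝ) := by
      obtain ⟨hpos, hdiag, hroots⟩ := key k
      have htr_eq : (((A ^ (2 ^ k)).trace : ℝ) : ℂ) = (R.map (fun z => z ^ (2 ^ k))).sum := by
        rw [← htrace, Matrix.trace_eq_sum_roots_charpoly, hroots]
      have habs : ‖(R.map (fun z => z ^ (2 ^ k))).sum‖ ≤ n := by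
        calc ‖(R.map (fun z => z ^ (2 ^ k))).sum‖
            ≤ ((R.map (fun z => z ^ (2 ^ k))).map norm).sum := norm_multiset_sum_le _
          _ ≤ ((R.map (fun z => z ^ (2 ^ k))).map norm).card • (1 : ℝ) := by
              apply Multiset.sum_le_card_nsmul
              intro x hx
              rw [Multiset.map_map] at hx
              obtain ⟨z, hz, rfl⟩ := Multiset.mem_map.mp hx
              simp only [Function.comp_apply, norm_pow]
              exact pow_le_one₀ (norm_nonneg z) (habs_le z hz)
          _ ≤ n := by
              simp [hcardR]
      have htr_le : (A ^ (2 ^ k)).trace ≤ (n : ℝ) := by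
        calc (A ^ (2 ^ k)).trace ≤ |(A ^ (2 ^ k)).trace| := le_abs_self _
          _ = ‖(((A ^ (2 ^ k)).trace : ℝ) : ℂ)‖ := by rw [Complex.norm_real, Real.norm_eq_abs]
          _ = ‖(R.map (fun z => z ^ (2 ^ k))).sum‖ := by rw [htr_eq]
          _ ≤ n := habs
      have hdle : (A ^ (2 ^ k)) i i ≤ (A ^ (2 ^ k)).trace := by
        rw [Matrix.trace]
        exact Finset.single_le_sum (f := fun j => (A ^ (2 ^ k)).diag j)
          (fun j _ => hpos j j) (Finset.mem_univ i)
      exact (hdiag i).trans (hdle.trans htr_le)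
    have h2 : (A i i) ^ k ≤ (A i i) ^ (2 ^ k) :=
      pow_le_pow_right₀ hgt.le (Nat.lt_two_pow_self (n := k)).le
    linarith
  -- trace bounds
  have htr0 : 0 ≤ A.trace := Finset.sum_nonneg fun i _ => hA i i
  have htr_ub : A.trace ≤ (n : ℝ) - 1 := by
    have hmem0 : (⟨0, by omega⟩ : Fin n) ∈ (Finset.univ : Finset (Fin n)) := Finset.mem_univ _
    have hsplit : A.trace = ∑ i ∈ Finset.univ.erase (⟨0, by omega⟩ : Fin n), A i i := by
      rw [Matrix.trace, ← Finset.sum_erase_add _ _ hmem0]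
      simp [Matrix.diag, h11]
    rw [hsplit]
    calc ∑ i ∈ Finset.univ.erase (⟨0, by omega⟩ : Fin n), A i i
        ≤ (Finset.univ.erase (⟨0, by omega⟩ : Fin n)).card • (1 : ℝ) :=
          Finset.sum_le_card_nsmul _ _ _ (fun i _ => hdiag1 i)
      _ = (n : ℝ) - 1 := by
          rw [Finset.card_erase_of_mem hmem0, Finset.card_univ, Fintype.card_fin]
          rw [nsmul_eq_mul, mul_one]
          have : (1 : ℕ) ≤ n := by omega
          push_cast [Nat.cast_sub this]
          ring
  -- put it together
  obtain ⟨lam, hlamR, hlamabs⟩ := hex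
  have hTbdd : BddAbove {r : ℝ | ∃ μ ∈ eigs A, ∃ ν ∈ eigs A, r = ‖μ - ν‖} := by
    have heq : {r : ℝ | ∃ μ ∈ eigs A, ∃ ν ∈ eigs A, r = ‖μ - ν‖}
        = (fun p : ℂ × ℂ => ‖p.1 - p.2‖) ''
            (((eigs A).toFinset : Set ℂ) ×ˢ ((eigs A).toFinset : Set ℂ)) := by
      ext r
      simp only [Set.mem_setOf_eq, Set.mem_image, Set.mem_prod, Multiset.mem_toFinset,
        Finset.mem_coe, Prod.exists]
      constructor
      · rintro ⟨μ, hμ, ν, hν, rfl⟩; exact ⟨μ, ν, ⟨hμ, hν⟩, rfl⟩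
      · rintro ⟨μ, ν, ⟨hμ, hν⟩, rfl⟩; exact ⟨μ, hμ, ν, hν, rfl⟩
    rw [heq]
    exact ((((eigs A).toFinset.finite_toSet).prod ((eigs A).toFinset.finite_toSet)).image _).bddAbove
  have hpair : ∀ μ ∈ R, ‖μ - lam‖ ≤ spread A := by
    intro μ hμ
    exact le_csSup hTbdd ⟨μ, hμ, lam, hlamR, rfl⟩
  have hsub : (R.map (fun z => z - lam)).sum = R.sum - (n : ℂ) * lam := by
    rw [msum_sub, hcardR, nsmul_eq_mul]
  have hdist : ‖R.sum - (n : ℂ) * lam‖ ≤ n * spread A := by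
    rw [← hsub]
    calc ‖(R.map (fun z => z - lam)).sum‖
        ≤ ((R.map (fun z => z - lam)).map norm).sum := norm_multiset_sum_le _
      _ ≤ ((R.map (fun z => z - lam)).map norm).card • spread A := by
          apply Multiset.sum_le_card_nsmul
          intro x hx
          rw [Multiset.map_map] at hx
          obtain ⟨z, hz, rfl⟩ := Multiset.mem_map.mp hx
          simpa using hpair z hz
      _ = n * spread A := by
          simp [hcardR, nsmul_eq_mul]
  have hfinal : (n : ℝ) ≤ n * spread A + A.trace := by
    have h3 : (n : ℝ) = ‖(n : ℂ) * lam‖ := by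
      rw [norm_mul, hlamabs, mul_one, Complex.norm_natCast]
    calc (n : ℝ) = ‖(n : ℂ) * lam‖ := h3
      _ = ‖((n : ℂ) * lam - R.sum) + R.sum‖ := by ring_nf
      _ ≤ ‖(n : ℂ) * lam - R.sum‖ + ‖R.sum‖ := norm_add_le _ _
      _ = ‖R.sum - (n : ℂ) * lam‖ + ‖R.sum‖ := by rw [norm_sub_rev]
      _ ≤ n * spread A + ‖R.sum‖ := by linarith [hdist]
      _ = n * spread A + A.trace := by
          rw [hRsum, Complex.norm_real, Real.norm_eq_abs, abs_of_nonneg htr0]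
  have : (1 : ℝ) ≤ n * spread A := by linarith
  rw [div_le_iff₀ hnpos]
  linarith [this]
end

section
/- Let A be an n×n real matrix with nonnegative entries and suppose A has at least k zero diagonal entries, where 0 ≤ k < n. Then for every positive integer m, (tr A)^m ≤ (n − k)^{m−1} · tr(A^m). -/
open Matrix Polynomial

lemma pow_entry_nonneg {n : ℕ} (A : Matrix (Fin n) (Fin n) ℝ)
    (hA : ∀ i j, 0 ≤ A i j) (m : ℕ) (i j : Fin n) : 0 ≤ (A ^ m) i j := by
  induction m generalizing i j with
  | zero =>
    simp [Matrix.one_apply]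
    positivity
  | succ p ih =>
    rw [pow_succ, Matrix.mul_apply]
    exact Finset.sum_nonneg fun l _ => mul_nonneg (ih i l) (hA l j)

lemma diag_pow_le {n : ℕ} (A : Matrix (Fin n) (Fin n) ℝ)
    (hA : ∀ i j, 0 ≤ A i j) (m : ℕ) (hm : 1 ≤ m) (i : Fin n) :
    (A i i) ^ m ≤ (A ^ m) i i := by
  induction m with
  | zero => omega
  | succ p ih =>
    rcases Nat.eq_or_lt_of_le hm with h | h
    · simp [← h]
    · have hp : 1 ≤ p := by omega
      have h1 : (A i i) ^ (p + 1) ≤ (A ^ p) i i * A i i := by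
        rw [pow_succ]
        exact mul_le_mul_of_nonneg_right (ih hp) (hA i i)
      refine h1.trans ?_
      rw [pow_succ, Matrix.mul_apply]
      exact Finset.single_le_sum
        (fun l _ => mul_nonneg (pow_entry_nonneg A hA p i l) (hA l i))
        (Finset.mem_univ i)

theorem jll_ineq_zero_diagonal (n k : ℕ) (hkn : k < n) (A : Matrix (Fin n) (Fin n) ℝ)
    (hA : ∀ i j, 0 ≤ A i j)
    (hz : k ≤ (Finset.univ.filter (fun i => A i i = 0)).card)
    (m : ℕ) (hm : 1 ≤ m) :
    (A.trace) ^ m ≤ ((n - k : ℕ) : ℝ) ^ (m - 1) * (A ^ m).trace := by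
  set T : Finset (Fin n) := Finset.univ.filter (fun i => A i i ≠ 0) with hT
  have htr : A.trace = ∑ i ∈ T, A i i := by
    rw [Matrix.trace]
    exact (Finset.sum_filter_of_ne fun i _ h => h).symm
  have hcardT : (T.card : ℝ) ≤ ((n - k : ℕ) : ℝ) := by
    have h2 : (Finset.univ.filter (fun i => A i i = 0)).card + T.card = n := by
      rw [hT]
      have := Finset.card_filter_add_card_filter_not
        (s := (Finset.univ : Finset (Fin n))) (p := fun i => A i i = 0)
      simpa using this
    have : T.card ≤ n - k := by omega
    exact_mod_cast this
  have htrm : ∑ i ∈ T, (A i i) ^ m ≤ (A ^ m).trace := by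
    rw [Matrix.trace]
    refine le_trans (Finset.sum_le_sum fun i _ => diag_pow_le A hA m hm i) ?_
    refine Finset.sum_le_sum_of_subset_of_nonneg (Finset.filter_subset _ _) ?_
    intro i _ _
    exact pow_entry_nonneg A hA m i i
  obtain ⟨p, hp⟩ : ∃ p, m = p + 1 := ⟨m - 1, by omega⟩
  subst hp
  have hpm := pow_sum_le_card_mul_sum_pow (s := T) (f := fun i => A i i)
    (fun i _ => hA i i) p
  rw [htr]
  simp only [Nat.add_sub_cancel]
  calc (∑ i ∈ T, A i i) ^ (p + 1) ≤ (T.card : ℝ) ^ p * ∑ i ∈ T, (A i i) ^ (p+1) := hpm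
    _ ≤ ((n - k : ℕ) : ℝ) ^ p * (A ^ (p+1)).trace := by
        refine mul_le_mul (pow_le_pow_left₀ (by positivity) hcardT p) htrm ?_ (by positivity)
        exact Finset.sum_nonneg fun i _ => pow_nonneg (hA i i) _
end

section
/- Let n ≥ 6 and let A be an n×n real matrix with nonnegative entries, spectral radius r(A) = 1, and a_{11} = 0. Then the spread of A satisfies s(A) > 2/(4 + √(2(n + 3))). -/
open Matrix Polynomial

namespace SpreadAux

lemma eval_charpoly {m : ℕ} (M : Matrix (Fin m) (Fin m) ℂ) (z : ℂ) :
    M.charpoly.eval z = (z • (1 : Matrix (Fin m) (Fin m) ℂ) - M).det := by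
  rw [Matrix.charpoly, ← Polynomial.coe_evalRingHom, RingHom.map_det]
  congr 1
  ext i j
  by_cases h : i = j
  · subst h
    simp [Matrix.charmatrix_apply, Matrix.one_apply_eq]
  · simp [Matrix.charmatrix_apply, Matrix.one_apply_ne h, h,
      Matrix.diagonal_apply_ne _ h]

lemma card_roots_charpoly {m : ℕ} (M : Matrix (Fin m) (Fin m) ℂ) :
    Multiset.card M.charpoly.roots = m := by
  have h := (Polynomial.splits_iff_card_roots (f := M.charpoly)).mp (IsAlgClosed.splits _)
  rw [h, Matrix.charpoly_natDegree_eq_dim, Fintype.card_fin]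

lemma det_smul_one_sub {m : ℕ} (M : Matrix (Fin m) (Fin m) ℂ) (y : ℂ) :
    (y • (1 : Matrix (Fin m) (Fin m) ℂ) - M).det
      = (M.charpoly.roots.map fun a => y - a).prod := by
  rw [← eval_charpoly]
  conv_lhs => rw [Polynomial.Splits.eq_prod_roots_of_monic
    (IsAlgClosed.splits _) M.charpoly_monic]
  rw [Polynomial.eval_multiset_prod, Multiset.map_map]
  simp

lemma roots_charpoly_sq {m : ℕ} (M : Matrix (Fin m) (Fin m) ℂ) :
    (M * M).charpoly.roots = M.charpoly.roots.map (fun z => z ^ 2) := by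
  have hcard := card_roots_charpoly M
  have key : (M * M).charpoly
      = ((M.charpoly.roots.map fun z => z ^ 2).map fun a => X - C a).prod := by
    apply Polynomial.funext
    intro w
    obtain ⟨z, rfl⟩ := IsAlgClosed.exists_pow_nat_eq (k := ℂ) w (by norm_num : 0 < 2)
    have hfact : (z ^ 2 : ℂ) • (1 : Matrix (Fin m) (Fin m) ℂ) - M * M
        = (z • 1 - M) * (z • 1 + M) := by
      have hcomm : (z • (1 : Matrix (Fin m) (Fin m) ℂ)) * M = M * (z • 1) := by
        simp [Matrix.smul_mul, Matrix.mul_smul]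
      have hzz : (z • (1 : Matrix (Fin m) (Fin m) ℂ)) * (z • 1) = (z ^ 2) • 1 := by
        simp [Matrix.smul_mul, Matrix.mul_smul, smul_smul, sq]
      rw [sub_mul, mul_add, mul_add, hcomm, hzz]
      abel
    have hneg : (z • (1 : Matrix (Fin m) (Fin m) ℂ) + M) = -(((-z) • 1) - M) := by
      rw [neg_smul, neg_sub, sub_neg_eq_add, add_comm]
    have hconst : ((-1 : ℂ)) ^ m = (M.charpoly.roots.map fun _ => (-1 : ℂ)).prod := by
      rw [Multiset.map_const', Multiset.prod_replicate, hcard]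
    rw [eval_charpoly, hfact, Matrix.det_mul, det_smul_one_sub, hneg, Matrix.det_neg,
      det_smul_one_sub, Fintype.card_fin, Polynomial.eval_multiset_prod, Multiset.map_map,
      Multiset.map_map, hconst, ← Multiset.prod_map_mul, ← Multiset.prod_map_mul]
    refine congrArg Multiset.prod (Multiset.map_congr rfl fun a _ => ?_)
    simp only [Function.comp_apply, Polynomial.eval_sub, Polynomial.eval_X, Polynomial.eval_C]
    ring
  rw [key, Polynomial.roots_multiset_prod_X_sub_C]

lemma conj_mem_eigs {m : ℕ} (A : Matrix (Fin m) (Fin m) ℝ) {z : ℂ} (hz : z ∈ eigs A) :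
    (starRingEnd ℂ) z ∈ eigs A := by
  have hmap : (A.map Complex.ofReal).charpoly = A.charpoly.map Complex.ofRealHom :=
    Matrix.charpoly_map A Complex.ofRealHom
  unfold eigs at hz ⊢
  rw [hmap] at hz ⊢
  set q : Polynomial ℂ := A.charpoly.map Complex.ofRealHom with hq
  rw [Polynomial.mem_roots'] at hz ⊢
  obtain ⟨h0, hroot⟩ := hz
  refine ⟨h0, ?_⟩
  have hself : q.map (starRingEnd ℂ) = q := by
    rw [hq, Polynomial.map_map]
    congr 1
    ext x
    simp [Complex.conj_ofReal]
  have heval : q.eval ((starRingEnd ℂ) z) = (starRingEnd ℂ) (q.eval z) := by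
    conv_lhs => rw [← hself]
    rw [Polynomial.eval_map, Polynomial.eval₂_hom]
  rw [Polynomial.IsRoot, heval, hroot, map_zero]

lemma msum_re (s : Multiset ℂ) : s.sum.re = (s.map Complex.re).sum := by
  induction s using Multiset.induction with
  | empty => simp
  | cons a s ih => simp [ih]

lemma msum_expand1 (s : Multiset ℂ) (x : ℝ) :
    (s.map fun z => (z.re - x) ^ 2).sum
      = (s.map fun z => z.re ^ 2).sum - 2 * x * (s.map Complex.re).sum
        + (Multiset.card s : ℝ) * x ^ 2 := by
  induction s using Multiset.induction with
  | empty => simp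
  | cons a s ih => simp [ih]; ring

lemma msum_expand2 (s : Multiset ℂ) (x d e : ℝ) :
    (s.map fun z => d * (z.re - x) + e).sum
      = d * ((s.map Complex.re).sum - (Multiset.card s : ℝ) * x)
        + (Multiset.card s : ℝ) * e := by
  induction s using Multiset.induction with
  | empty => simp
  | cons a s ih => simp [ih]; ring

lemma msum_sub2 (s : Multiset ℂ) :
    (s.map fun z => z.re ^ 2 - z.im ^ 2).sum
      = (s.map fun z => z.re ^ 2).sum - (s.map fun z => z.im ^ 2).sum := by
  induction s using Multiset.induction with
  | empty => simp
  | cons a s ih => simp [ih]; ring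

end SpreadAux

set_option maxHeartbeats 1000000 in
theorem spread_gt_of_n_ge_six (n : ℕ) (hn : 6 ≤ n) (A : Matrix (Fin n) (Fin n) ℝ)
    (hA : ∀ i j, 0 ≤ A i j) (hr : specRad A = 1)
    (h11 : A ⟨0, by omega⟩ ⟨0, by omega⟩ = 0) :
    2 / (4 + Real.sqrt (2 * ((n : ℝ) + 3))) < spread A := by
  by_contra hcon
  push_neg at hcon
  set c : ℝ := 2 / (4 + Real.sqrt (2 * ((n : ℝ) + 3))) with hc
  have hn6 : (6:ℝ) ≤ (n:ℝ) := by exact_mod_cast hn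
  have h0n : 0 < n := by omega
  set R : ℝ := Real.sqrt (2 * ((n : ℝ) + 3)) with hRdef
  have hRsq : R ^ 2 = 2 * (n:ℝ) + 6 := by
    rw [hRdef, Real.sq_sqrt (by nlinarith : (0:ℝ) ≤ 2 * ((n:ℝ) + 3))]; ring
  have hR4 : 4 ≤ R := by nlinarith [Real.sqrt_nonneg (2 * ((n:ℝ) + 3)), hRsq]
  have hRpos : (0:ℝ) < 4 + R := by linarith
  have hcpos : 0 < c := by rw [hc]; positivity
  have hcq : c ≤ 1/4 := by
    rw [hc, div_le_iff₀ hRpos]; nlinarith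
  have hcR : c * (4 + R) = 2 := by
    rw [hc]; field_simp
  have hcR2 : c * R = 2 - 4 * c := by nlinarith [hcR]
  have hNc : (n:ℝ) * c^2 = 2 - 8*c + 5*c^2 := by
    linear_combination (-(c^2/2)) * hRsq + ((c*R + 2 - 4*c)/2) * hcR2
  clear_value R c
  clear hc hRdef
  -- eigenvalue basics
  set B := A.map Complex.ofReal with hB
  have hEdef : eigs A = B.charpoly.roots := rfl
  have hEcard : Multiset.card (eigs A) = n := by
    rw [hEdef]; exact SpreadAux.card_roots_charpoly B
  have hEne : eigs A ≠ 0 := by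
    intro h; rw [h] at hEcard; simp at hEcard; omega
  have hfin1 : Set.Finite {r : ℝ | ∃ μ ∈ eigs A, r = ‖μ‖} := by
    refine Set.Finite.subset (Set.Finite.image (fun μ => ‖μ‖)
      (Multiset.finite_toSet (eigs A))) ?_
    rintro r ⟨μ, hμ, rfl⟩; exact ⟨μ, hμ, rfl⟩
  have habs_le : ∀ μ ∈ eigs A, ‖μ‖ ≤ 1 := by
    intro μ hμ
    calc ‖μ‖ ≤ specRad A := le_csSup hfin1.bddAbove ⟨μ, hμ, rfl⟩
      _ = 1 := hr
  have hex : ∃ μ ∈ eigs A, ‖μ‖ = 1 := by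
    obtain ⟨μ0, hμ0⟩ := Multiset.exists_mem_of_ne_zero hEne
    have hne : Set.Nonempty {r : ℝ | ∃ μ ∈ eigs A, r = ‖μ‖} := ⟨_, μ0, hμ0, rfl⟩
    have hmem := hne.csSup_mem hfin1
    have h1 : (1:ℝ) ∈ {r : ℝ | ∃ μ ∈ eigs A, r = ‖μ‖} := by
      rw [← hr]; exact hmem
    obtain ⟨μ, hμ, h1'⟩ := h1
    exact ⟨μ, hμ, h1'.symm⟩
  have hfin2 : Set.Finite {r : ℝ | ∃ μ ∈ eigs A, ∃ ν ∈ eigs A, r = ‖μ - ν‖} := by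
    refine Set.Finite.subset (Set.Finite.image (fun p : ℂ × ℂ => ‖p.1 - p.2‖)
      ((Multiset.finite_toSet (eigs A)).prod (Multiset.finite_toSet (eigs A)))) ?_
    rintro r ⟨μ, hμ, ν, hν, rfl⟩; exact ⟨(μ, ν), ⟨hμ, hν⟩, rfl⟩
  have hpair : ∀ μ ∈ eigs A, ∀ ν ∈ eigs A, ‖μ - ν‖ ≤ c := by
    intro μ hμ ν hν
    exact le_trans (le_csSup hfin2.bddAbove ⟨μ, hμ, ν, hν, rfl⟩) hcon
  -- the distinguished eigenvalue of modulus one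
  obtain ⟨l1, hl1E, hl1abs⟩ := hex
  set x1 : ℝ := l1.re with hx1def
  set y1 : ℝ := l1.im with hy1def
  have hconj := SpreadAux.conj_mem_eigs A hl1E
  have hy1 : |2 * y1| ≤ c := by
    have h := hpair l1 hl1E _ hconj
    rw [Complex.sub_conj] at h
    calc |2 * y1| = ‖((2 * y1 : ℝ) : ℂ) * Complex.I‖ := by
          rw [norm_mul, Complex.norm_I, Complex.norm_real, Real.norm_eq_abs, mul_one]
      _ ≤ c := h
  have hy1sq : y1^2 ≤ c^2/4 := by
    have h := mul_self_le_mul_self (abs_nonneg (2*y1)) hy1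
    rw [abs_mul_abs_self] at h
    nlinarith [h]
  have hnormsq : x1^2 + y1^2 = 1 := by
    have h := Complex.sq_norm l1
    rw [hl1abs] at h
    have h2 : Complex.normSq l1 = x1^2 + y1^2 := by
      rw [Complex.normSq_apply]; rw [hx1def, hy1def]; ring
    rw [h2] at h; norm_num at h; linarith [h]
  -- traces
  set m1 : ℝ := A.trace with hm1
  set m2 : ℝ := (A*A).trace with hm2
  have htrB : B.trace = (m1 : ℂ) := by
    rw [hB, hm1]
    simp [Matrix.trace, Matrix.diag, Matrix.map_apply]
  have hsum1 : ((eigs A).map Complex.re).sum = m1 := by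
    have h := Matrix.trace_eq_sum_roots_charpoly B
    rw [htrB] at h
    have h2 := congrArg Complex.re h
    rw [Complex.ofReal_re, SpreadAux.msum_re] at h2
    rw [hEdef]; exact h2.symm
  have hBB : B * B = (A*A).map Complex.ofReal := by
    rw [hB]
    ext i j
    simp [Matrix.mul_apply, Matrix.map_apply]
  have htrBB : (B*B).trace = (m2 : ℂ) := by
    rw [hBB, hm2]
    simp [Matrix.trace, Matrix.diag, Matrix.map_apply]
  have hsum2 : ((eigs A).map fun z => z.re^2).sum - ((eigs A).map fun z => z.im^2).sum = m2 := by
    have h := Matrix.trace_eq_sum_roots_charpoly (B*B)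
    rw [htrBB, SpreadAux.roots_charpoly_sq] at h
    have h2 := congrArg Complex.re h
    rw [Complex.ofReal_re, SpreadAux.msum_re, Multiset.map_map] at h2
    have h3 : ((B.charpoly.roots).map (Complex.re ∘ fun z => z ^ 2)).sum
        = ((B.charpoly.roots).map fun z => z.re^2 - z.im^2).sum := by
      refine congrArg Multiset.sum (Multiset.map_congr rfl fun z _ => ?_)
      simp [Function.comp_apply, sq, Complex.mul_re]
    rw [h3, SpreadAux.msum_sub2] at h2
    rw [hEdef]; exact h2.symm
  have hm1nonneg : 0 ≤ m1 := by
    rw [hm1, Matrix.trace]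
    exact Finset.sum_nonneg fun i _ => hA i i
  -- Cauchy-Schwarz using the zero diagonal entry
  have hν : (0:ℝ) ≤ (n:ℝ) - 1 := by linarith
  have hCS : m1^2 ≤ ((n:ℝ) - 1) * m2 := by
    classical
    set s : Finset (Fin n) := Finset.univ.erase ⟨0, h0n⟩ with hs
    have hm1s : m1 = ∑ i ∈ s, A i i := by
      rw [hm1, Matrix.trace, ← Finset.sum_erase_add _ _ (Finset.mem_univ (⟨0, h0n⟩ : Fin n))]
      simp [Matrix.diag, h11, hs]
    have hcards : (s.card : ℝ) = (n:ℝ) - 1 := by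
      rw [hs, Finset.card_erase_of_mem (Finset.mem_univ _), Finset.card_univ, Fintype.card_fin]
      have h1 : 1 ≤ n := by omega
      push_cast [Nat.cast_sub h1]
      ring
    have hCS1 : (∑ i ∈ s, A i i)^2 ≤ (s.card : ℝ) * ∑ i ∈ s, (A i i)^2 :=
      sq_sum_le_card_mul_sum_sq
    have hdiag2 : ∀ i, (A i i)^2 ≤ (A*A) i i := fun i => by
      rw [Matrix.mul_apply]
      have h := Finset.single_le_sum (f := fun k => A i k * A k i)
        (fun k _ => mul_nonneg (hA i k) (hA k i)) (Finset.mem_univ i)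
      rw [sq]; exact h
    have hsum_le : ∑ i ∈ s, (A i i)^2 ≤ m2 := by
      rw [hm2, Matrix.trace]
      calc ∑ i ∈ s, (A i i)^2 ≤ ∑ i ∈ s, (A*A) i i := Finset.sum_le_sum fun i _ => hdiag2 i
        _ ≤ ∑ i, (A*A).diag i := Finset.sum_le_sum_of_subset_of_nonneg (Finset.subset_univ s)
            (fun i _ _ => le_trans (sq_nonneg _) (hdiag2 i))
    calc m1^2 = (∑ i ∈ s, A i i)^2 := by rw [hm1s]
      _ ≤ (s.card : ℝ) * ∑ i ∈ s, (A i i)^2 := hCS1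
      _ = ((n:ℝ)-1) * ∑ i ∈ s, (A i i)^2 := by rw [hcards]
      _ ≤ ((n:ℝ)-1) * m2 := mul_le_mul_of_nonneg_left hsum_le hν
  -- geometry of eigenvalues
  have hre_close : ∀ z ∈ eigs A, |z.re - x1| ≤ c := by
    intro z hz
    have h := hpair z hz l1 hl1E
    have h2 := Complex.abs_re_le_norm (z - l1)
    rw [Complex.sub_re] at h2
    exact le_trans h2 h
  have hzre_le : ∀ z ∈ eigs A, z.re ≤ 1 := fun z hz =>
    le_trans (Complex.re_le_norm z) (habs_le z hz)
  have hx1le : x1 ≤ 1 := hzre_le l1 hl1E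
  have hx1pos : 0 < x1 := by
    by_contra hneg
    push_neg at hneg
    have hup : ∀ r ∈ (eigs A).map Complex.re, r ≤ x1 + c := by
      intro r hrm
      obtain ⟨z, hz, rfl⟩ := Multiset.mem_map.mp hrm
      have h := abs_le.mp (hre_close z hz)
      linarith [h.2]
    have hsumle := Multiset.sum_le_card_nsmul _ _ hup
    rw [Multiset.card_map, hEcard, hsum1, nsmul_eq_mul] at hsumle
    have hx1neg : x1 + c < 0 := by nlinarith [hnormsq, hy1sq, hcq, hcpos]
    have : (n:ℝ) * (x1 + c) < 0 := mul_neg_of_pos_of_neg (by linarith) hx1neg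
    linarith
  have hx1ge : 1 - c^2/4 ≤ x1 := by
    nlinarith [hnormsq, hy1sq, hx1pos, hcq, hcpos]
  set η : ℝ := 1 - x1 with hηdef
  have hηnonneg : 0 ≤ η := by rw [hηdef]; linarith
  have hηle : η ≤ c^2/4 := by rw [hηdef]; linarith
  have hcc : c*c ≤ (1/4)*c := mul_le_mul_of_nonneg_right hcq hcpos.le
  have hηc : η ≤ c := by nlinarith [hηle, hcc, hcpos]
  -- the sum T of squared deviations of real parts
  have hTub : ((eigs A).map fun z => (z.re - x1)^2).sum
      ≤ (η - c) * (m1 - (n:ℝ)*x1) + (n:ℝ)*(η*c) := by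
    have hpoint : ∀ z ∈ eigs A,
        (fun z : ℂ => (z.re - x1)^2) z ≤ (fun z : ℂ => (η - c)*(z.re - x1) + η*c) z := by
      intro z hz
      have h1 := abs_le.mp (hre_close z hz)
      have h2 : z.re - x1 ≤ η := by rw [hηdef]; linarith [hzre_le z hz]
      have hprod : (z.re - x1 - η) * (z.re - x1 + c) ≤ 0 :=
        mul_nonpos_of_nonpos_of_nonneg (by linarith) (by linarith [h1.1])
      simp only
      nlinarith [hprod]
    calc ((eigs A).map fun z => (z.re - x1)^2).sum
        ≤ ((eigs A).map fun z => (η - c)*(z.re - x1) + η*c).sum :=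
          Multiset.sum_map_le_sum_map _ _ hpoint
      _ = (η - c) * (m1 - (n:ℝ)*x1) + (n:ℝ)*(η*c) := by
          rw [SpreadAux.msum_expand2, hsum1, hEcard]
  have hTexp : ((eigs A).map fun z => (z.re - x1)^2).sum
      = ((eigs A).map fun z => z.re^2).sum - 2*x1*m1 + (n:ℝ)*x1^2 := by
    rw [SpreadAux.msum_expand1, hsum1, hEcard]
  have hy1Sy2 : y1^2 ≤ ((eigs A).map fun z => z.im^2).sum := by
    rw [← Multiset.cons_erase hl1E, Multiset.map_cons, Multiset.sum_cons]
    have h : (0:ℝ) ≤ (((eigs A).erase l1).map fun z => z.im^2).sum :=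
      Multiset.sum_nonneg (fun r hr => by
        obtain ⟨z, _, rfl⟩ := Multiset.mem_map.mp hr
        positivity)
    rw [hy1def]
    linarith
  -- final contradiction
  obtain ⟨T, hTdef⟩ : ∃ t : ℝ, ((eigs A).map fun z => (z.re - x1)^2).sum = t := ⟨_, rfl⟩
  obtain ⟨Sy2, hSy2def⟩ : ∃ t : ℝ, ((eigs A).map fun z => z.im^2).sum = t := ⟨_, rfl⟩
  obtain ⟨Sx2, hSx2def⟩ : ∃ t : ℝ, ((eigs A).map fun z => z.re^2).sum = t := ⟨_, rfl⟩
  rw [hTdef, hSx2def] at hTexp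
  rw [hTdef] at hTub
  rw [hSy2def] at hy1Sy2
  rw [hSy2def, hSx2def] at hsum2
  have hTmul : ((n:ℝ)-1) * T
      = ((n:ℝ)-1)*m2 + ((n:ℝ)-1)*Sy2 - 2*((n:ℝ)-1)*x1*m1 + (n:ℝ)*((n:ℝ)-1)*x1^2 := by
    rw [hTexp]; linear_combination ((n:ℝ)-1) * hsum2
  have hn1eq : ((n:ℝ)-1)*(x1^2 + y1^2 - 1) = 0 := by rw [hnormsq]; ring
  have e1 : (m1 - ((n:ℝ)-1)*x1)^2 + ((n:ℝ)-1) ≤ ((n:ℝ)-1) * T := by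
    have h4 : 0 ≤ ((n:ℝ)-1) * (Sy2 - y1^2) := mul_nonneg hν (by linarith [hy1Sy2])
    linarith only [hTmul, hCS, h4, hn1eq]
  clear_value η x1 y1
  obtain ⟨u, hu⟩ : ∃ t : ℝ, m1 - ((n:ℝ)-1)*x1 = t := ⟨_, rfl⟩
  rw [hu] at e1
  have e2 : u^2 + ((n:ℝ)-1) ≤ ((n:ℝ)-1)*((η - c)*(u - x1) + (n:ℝ)*(η*c)) := by
    have hux : m1 - (n:ℝ)*x1 = u - x1 := by linear_combination hu
    calc u^2 + ((n:ℝ)-1) ≤ ((n:ℝ)-1)*T := e1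
      _ ≤ ((n:ℝ)-1)*((η - c)*(m1 - (n:ℝ)*x1) + (n:ℝ)*(η*c)) :=
          mul_le_mul_of_nonneg_left hTub hν
      _ = ((n:ℝ)-1)*((η - c)*(u - x1) + (n:ℝ)*(η*c)) := by rw [hux]
  have hb1 : (n:ℝ)*(η*c) ≤ c/2 := by
    have h1 : (n:ℝ)*η ≤ (n:ℝ)*(c^2/4) :=
      mul_le_mul_of_nonneg_left hηle (by linarith)
    have h2 : (n:ℝ)*η*c ≤ (n:ℝ)*(c^2/4)*c :=
      mul_le_mul_of_nonneg_right h1 hcpos.le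
    have h3 : (n:ℝ)*(c^2/4)*c = (2 - 8*c + 5*c^2)*c/4 := by
      linear_combination (c/4) * hNc
    have h5 : 0 ≤ c^2*(8 - 5*c) := mul_nonneg (sq_nonneg c) (by linarith)
    linarith only [h2, h3, h5]
  have hb2 : ((n:ℝ)-1)*(c-η)^2 ≤ 2 - 8*c + 4*c^2 := by
    have h1 : (c-η)^2 ≤ c^2 := pow_le_pow_left₀ (by linarith) (by linarith) 2
    have h2 : ((n:ℝ)-1)*(c-η)^2 ≤ ((n:ℝ)-1)*c^2 := mul_le_mul_of_nonneg_left h1 hν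
    linarith only [h2, hNc]
  have hb3 : (c - η)*x1 ≤ c - η := by
    have := mul_le_mul_of_nonneg_left hx1le (show (0:ℝ) ≤ c - η by linarith)
    linarith only [this]
  have hfinalpos : (0:ℝ) < ((n:ℝ)-1) * (1/2 + c/2 - c^2) := by
    apply mul_pos (by linarith)
    linarith only [hcc, hcpos]
  have hb1ν := mul_le_mul_of_nonneg_left hb1 hν
  have hb3ν := mul_le_mul_of_nonneg_left hb3 hν
  have hνc : ((n:ℝ)-1)*(c-η) ≤ ((n:ℝ)-1)*c :=
    mul_le_mul_of_nonneg_left (by linarith) hν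
  have hb2ν := mul_le_mul_of_nonneg_left hb2 (show (0:ℝ) ≤ ((n:ℝ)-1)/4 by linarith)
  have hsq := sq_nonneg (2*u + ((n:ℝ)-1)*(c-η))
  linarith only [e2, hsq, hb1ν, hb3ν, hνc, hb2ν, hfinalpos]
end

section
/- Let A be a 5×5 real matrix with nonnegative entries, spectral radius r(A) = 1, and a_{11} = 0. Then the spread of A satisfies s(A) ≥ 5/(8 + √74). -/
open Matrix Polynomial

lemma aeval_X_sq_injective : Function.Injective (Polynomial.aeval (X ^ 2 : ℂ[X]) : ℂ[X] →ₐ[ℂ] ℂ[X]) := by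
  intro f g h
  have h0 : (f - g).comp (X ^ 2) = 0 := by
    rw [comp_eq_aeval, map_sub, h, sub_self]
  rcases Polynomial.comp_eq_zero_iff.mp h0 with h1 | ⟨_, h2⟩
  · exact sub_eq_zero.mp h1
  · exfalso
    have : (X ^ 2 : ℂ[X]) = C ((X ^ 2 : ℂ[X]).coeff 0) := h2
    simp at this


lemma charpoly_mul_self (n : ℕ) (M : Matrix (Fin n) (Fin n) ℂ) :
    (M * M).charpoly = ((M.charpoly.roots.map (fun ν => ν ^ 2)).map (fun a => X - C a)).prod := by
  set R := M.charpoly.roots with hR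
  have hcard : Multiset.card R = n := by
    rw [hR, Polynomial.splits_iff_card_roots.mp (IsAlgClosed.splits M.charpoly),
      Matrix.charpoly_natDegree_eq_dim, Fintype.card_fin]
  have hp : M.charpoly = (R.map (fun a => X - C a)).prod :=
    (IsAlgClosed.splits M.charpoly).eq_prod_roots_of_monic M.charpoly_monic
  set φ : ℂ[X] →ₐ[ℂ] ℂ[X] := Polynomial.aeval (X ^ 2 : ℂ[X]) with hφ
  set ψ : ℂ[X] →ₐ[ℂ] ℂ[X] := Polynomial.aeval (-X : ℂ[X]) with hψ
  set N : Matrix (Fin n) (Fin n) ℂ[X] := (C : ℂ →+* ℂ[X]).mapMatrix M with hN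
  set P : Matrix (Fin n) (Fin n) ℂ[X] := Matrix.scalar (Fin n) X with hP
  have hmapφ : (charmatrix (M * M)).map φ = Matrix.scalar (Fin n) (X ^ 2) - (C : ℂ →+* ℂ[X]).mapMatrix (M * M) := by
    ext i j
    by_cases h : i = j
    · subst h
      simp [charmatrix_apply_eq, Matrix.map_apply, Matrix.scalar_apply, RingHom.mapMatrix_apply,
        Matrix.diagonal_apply_eq, hφ, Matrix.sub_apply, Matrix.mul_apply, map_sum, _root_.map_mul]
    · simp [charmatrix_apply_ne _ _ _ h, Matrix.map_apply, Matrix.scalar_apply, RingHom.mapMatrix_apply,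
        Matrix.diagonal_apply_ne _ h, hφ, Matrix.sub_apply, Matrix.mul_apply, map_sum, _root_.map_mul]
  have hmapψ : (charmatrix M).map ψ = -(P + N) := by
    ext i j
    by_cases h : i = j
    · subst h
      simp [charmatrix_apply_eq, Matrix.map_apply, Matrix.scalar_apply, RingHom.mapMatrix_apply,
        Matrix.diagonal_apply_eq, hψ, hP, hN, Matrix.neg_apply, Matrix.add_apply]
      ring
    · simp [charmatrix_apply_ne _ _ _ h, Matrix.map_apply, Matrix.scalar_apply, RingHom.mapMatrix_apply,
        Matrix.diagonal_apply_ne _ h, hψ, hP, hN, Matrix.sub_apply, Matrix.neg_apply, Matrix.add_apply]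
  have hcomm : P * N = N * P :=
    (Matrix.scalar_commute X (fun r => Commute.all _ _) N)
  have hfac : Matrix.scalar (Fin n) (X ^ 2) - (C : ℂ →+* ℂ[X]).mapMatrix (M * M) = (P - N) * (P + N) := by
    have hNN : (C : ℂ →+* ℂ[X]).mapMatrix (M * M) = N * N := by simp [hN]
    have hPP : P * P = Matrix.scalar (Fin n) (X ^ 2) := by
      rw [hP, ← _root_.map_mul, ← sq]
    rw [hNN, ← hPP, sub_mul, mul_add, mul_add, hcomm]
    abel
  have hchar : charmatrix M = P - N := rfl
  have hdetφ : φ ((M * M).charpoly) = M.charpoly * (P + N).det := by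
    have := RingHom.map_det φ.toRingHom (charmatrix (M * M))
    rw [Matrix.charpoly]
    simp only [RingHom.mapMatrix_apply, AlgHom.mapMatrix_apply, AlgHom.toRingHom_eq_coe, RingHom.coe_coe] at this
    rw [this, hmapφ, hfac, Matrix.det_mul, ← hchar, ← Matrix.charpoly]
  have hdetψ : ψ (M.charpoly) = (-1 : ℂ[X]) ^ n * (P + N).det := by
    have := RingHom.map_det ψ.toRingHom (charmatrix M)
    rw [Matrix.charpoly]
    simp only [RingHom.mapMatrix_apply, AlgHom.mapMatrix_apply, AlgHom.toRingHom_eq_coe, RingHom.coe_coe] at this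
    rw [this, hmapψ, Matrix.det_neg, Fintype.card_fin]
  have hψp : ψ M.charpoly = (-1 : ℂ[X]) ^ n * (R.map (fun ν => X + C ν)).prod := by
    rw [hp, map_multiset_prod, Multiset.map_map]
    have h1 : (R.map (⇑ψ ∘ fun a => X - C a)) = R.map (fun a => (-1 : ℂ[X]) * (X + C a)) :=
      Multiset.map_congr rfl (fun a _ => by
        simp [hψ, Polynomial.algebraMap_eq]; ring)
    rw [h1, Multiset.prod_map_mul (f := fun _ => (-1 : ℂ[X])) (g := fun a => X + C a),
      Multiset.map_const', Multiset.prod_replicate, hcard]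
  have hdet2 : (P + N).det = (R.map (fun ν => X + C ν)).prod := by
    have hne : ((-1 : ℂ[X]) ^ n) ≠ 0 := pow_ne_zero _ (by
      intro h; exact one_ne_zero (neg_eq_zero.mp h))
    apply mul_left_cancel₀ hne
    rw [← hdetψ, hψp]
  have hfinal : φ ((M * M).charpoly) = φ (((R.map (fun ν => ν ^ 2)).map (fun a => X - C a)).prod) := by
    rw [hdetφ, hdet2, map_multiset_prod, Multiset.map_map, Multiset.map_map]
    conv_lhs => rw [hp]
    rw [← Multiset.prod_map_mul]
    exact congrArg Multiset.prod (Multiset.map_congr rfl (fun a _ => by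
      simp [hφ, Polynomial.algebraMap_eq]; ring))
  exact aeval_X_sq_injective hfinal

lemma sum_sq_roots (n : ℕ) (M : Matrix (Fin n) (Fin n) ℂ) :
    (M.charpoly.roots.map (fun ν => ν ^ 2)).sum = (M * M).trace := by
  rw [Matrix.trace_eq_sum_roots_charpoly, charpoly_mul_self, Polynomial.roots_multiset_prod_X_sub_C]


set_option maxHeartbeats 1000000

theorem spread_ge_five_by_five (A : Matrix (Fin 5) (Fin 5) ℝ)
    (hA : ∀ i j, 0 ≤ A i j) (hr : specRad A = 1) (h11 : A 0 0 = 0) :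
    5 / (8 + Real.sqrt 74) ≤ spread A := by
  classical
  set B : Matrix (Fin 5) (Fin 5) ℂ := A.map Complex.ofReal with hB
  set R : Multiset ℂ := B.charpoly.roots with hRdef
  have heigs : eigs A = R := rfl
  have hcard : Multiset.card R = 5 := by
    rw [hRdef, Polynomial.splits_iff_card_roots.mp (IsAlgClosed.splits B.charpoly),
      Matrix.charpoly_natDegree_eq_dim, Fintype.card_fin]
  set t : ℝ := A.trace with ht
  set q : ℝ := (A * A).trace with hq
  have htrace : R.sum = (t : ℂ) := by
    rw [hRdef, ← Matrix.trace_eq_sum_roots_charpoly]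
    simp [hB, Matrix.trace, Matrix.map_apply, ht, Matrix.diag]
  have hBmul : B * B = (A * A).map Complex.ofReal := by
    rw [hB]
    exact (Matrix.map_mul (L := A) (M := A) (f := Complex.ofRealHom)).symm
  have htrace2 : (R.map (fun ν => ν ^ 2)).sum = (q : ℂ) := by
    rw [hRdef, sum_sq_roots, hBmul]
    simp [Matrix.trace, Matrix.map_apply, hq, Matrix.diag]
  -- trace nonneg
  have ht0 : 0 ≤ t := by
    rw [ht, Matrix.trace]
    exact Finset.sum_nonneg fun i _ => hA i i
  -- Cauchy-Schwarz with zero first diagonal entry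
  have hqt : t ^ 2 / 4 ≤ q := by
    have e2 : ∀ i : Fin 5, A i i ^ 2 ≤ (A * A) i i := by
      intro i
      rw [Matrix.mul_apply, sq]
      exact Finset.single_le_sum (f := fun j => A i j * A j i)
        (fun j _ => mul_nonneg (hA i j) (hA j i)) (Finset.mem_univ i)
    have e3 : q = ∑ i, (A * A) i i := by rw [hq, Matrix.trace]; rfl
    have e4 : t = ∑ i, A i i := by rw [ht, Matrix.trace]; rfl
    rw [e3, e4, Fin.sum_univ_five, Fin.sum_univ_five]
    have i0 := e2 0; have i1 := e2 1; have i2 := e2 2; have i3 := e2 3; have i4 := e2 4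
    rw [h11] at *
    nlinarith [sq_nonneg (A 1 1 - A 2 2), sq_nonneg (A 1 1 - A 3 3), sq_nonneg (A 1 1 - A 4 4),
      sq_nonneg (A 2 2 - A 3 3), sq_nonneg (A 2 2 - A 4 4), sq_nonneg (A 3 3 - A 4 4)]
  -- the eigenvalue of maximal modulus
  have hSfin : ({r : ℝ | ∃ μ ∈ eigs A, r = ‖μ‖}).Finite := by
    have : {r : ℝ | ∃ μ ∈ eigs A, r = ‖μ‖} ⊆ (fun z : ℂ => ‖z‖) '' (R.toFinset : Set ℂ) := by
      rintro r ⟨μ, hμ, rfl⟩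
      exact ⟨μ, by simpa [heigs] using hμ, rfl⟩
    exact Set.Finite.subset ((R.toFinset : Set ℂ).toFinite.image _) this
  have hSne : ({r : ℝ | ∃ μ ∈ eigs A, r = ‖μ‖}).Nonempty := by
    have : R ≠ 0 := by intro h; rw [h] at hcard; simp at hcard
    obtain ⟨μ, hμ⟩ := Multiset.exists_mem_of_ne_zero this
    exact ⟨‖μ‖, μ, by simpa [heigs] using hμ, rfl⟩
  have hmem : (1 : ℝ) ∈ {r : ℝ | ∃ μ ∈ eigs A, r = ‖μ‖} := by
    rw [← hr]; exact hSne.csSup_mem hSfin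
  obtain ⟨μ, hμR, hμabs⟩ := hmem
  rw [heigs] at hμR
  have habs : ‖μ‖ = 1 := hμabs.symm
  -- spread facts
  have hS2fin : ({r : ℝ | ∃ μ ∈ eigs A, ∃ ν ∈ eigs A, r = ‖μ - ν‖}).Finite := by
    have : {r : ℝ | ∃ μ ∈ eigs A, ∃ ν ∈ eigs A, r = ‖μ - ν‖} ⊆
        Set.image2 (fun a b => ‖a - b‖) (R.toFinset : Set ℂ) (R.toFinset : Set ℂ) := by
      rintro r ⟨a, ha, b, hb, rfl⟩
      exact ⟨a, by simpa [heigs] using ha, b, by simpa [heigs] using hb, rfl⟩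
    exact Set.Finite.subset (Set.Finite.image2 _ (R.toFinset : Set ℂ).toFinite
      (R.toFinset : Set ℂ).toFinite) this
  have hs_el : ∀ ν ∈ R, ‖μ - ν‖ ≤ spread A := by
    intro ν hν
    exact le_csSup hS2fin.bddAbove ⟨μ, by simpa [heigs] using hμR, ν, by simpa [heigs] using hν, rfl⟩
  have hs0 : 0 ≤ spread A := by
    have := hs_el μ hμR
    simpa using this
  set s : ℝ := spread A with hsdef
  -- decompose the root multiset
  set R' : Multiset ℂ := R.erase μ with hR'
  have hcons : R = μ ::ₘ R' := (Multiset.cons_erase hμR).symm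
  have hcard' : Multiset.card R' = 4 := by
    rw [hR', Multiset.card_erase_of_mem hμR, hcard]
    rfl
  have hsum' : R'.sum = (t : ℂ) - μ := by
    rw [hcons, Multiset.sum_cons] at htrace
    linear_combination htrace - μ
  have hsum2' : (R'.map (fun ν => ν ^ 2)).sum = (q : ℂ) - μ ^ 2 := by
    rw [hcons, Multiset.map_cons, Multiset.sum_cons] at htrace2
    linear_combination htrace2 - μ ^ 2
  -- the key identity for the sum of (μ - ν)²
  have hW : (R'.map (fun ν => (μ - ν) ^ 2)).sum = 5 * μ ^ 2 - 2 * (t : ℂ) * μ + (q : ℂ) := by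
    have expand : (R'.map (fun ν => (μ - ν) ^ 2)) =
        (R'.map (fun ν => (μ ^ 2 + (-(2 * μ)) * ν) + ν ^ 2)) :=
      Multiset.map_congr rfl (fun a _ => by ring)
    rw [expand, Multiset.sum_map_add, Multiset.sum_map_add, Multiset.map_const',
      Multiset.sum_replicate, hcard', Multiset.sum_map_mul_left]
    have hid : (R'.map (fun ν => ν)).sum = (t : ℂ) - μ := by
      rw [Multiset.map_id', hsum']
    rw [hid, hsum2']
    push_cast
    ring
  -- bound the real part of each (μ - ν)²
  have hre : ∀ z : ℂ, ‖z‖ ≤ s → (z ^ 2).re ≤ s ^ 2 := by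
    intro z hz
    have h1 : (z ^ 2).re = z.re * z.re - z.im * z.im := by
      rw [sq, Complex.mul_re]
    have h2 : ‖z‖ ^ 2 = z.re * z.re + z.im * z.im := by
      rw [Complex.sq_norm, Complex.normSq_apply]
    nlinarith [norm_nonneg z, sq_nonneg z.im]
  have hReW : (5 * μ ^ 2 - 2 * (t : ℂ) * μ + (q : ℂ)).re ≤ 4 * s ^ 2 := by
    rw [← hW]
    have hmapre : ((R'.map (fun ν => (μ - ν) ^ 2)).sum).re
        = ((R'.map (fun ν => (μ - ν) ^ 2)).map Complex.reAddGroupHom).sum :=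
      map_multiset_sum Complex.reAddGroupHom _
    rw [hmapre, Multiset.map_map]
    calc (R'.map (⇑Complex.reAddGroupHom ∘ fun ν => (μ - ν) ^ 2)).sum
        ≤ (R'.map (fun _ => s ^ 2)).sum := by
          apply Multiset.sum_map_le_sum_map
          intro ν hν
          have hνR : ν ∈ R := by rw [hR'] at hν; exact Multiset.mem_of_mem_erase hν
          exact hre (μ - ν) (hs_el ν hνR)
      _ = 4 * s ^ 2 := by
          rw [Multiset.map_const', Multiset.sum_replicate, hcard']
          simp
  -- imaginary part bound
  have hImsum : (R'.map Complex.im).sum = -μ.im := by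
    have h0 : ((R.sum).im) = 0 := by rw [htrace]; simp
    rw [hcons, Multiset.sum_cons] at h0
    have h1 : ((R'.sum).im) = (R'.map Complex.imAddGroupHom).sum :=
      map_multiset_sum Complex.imAddGroupHom _
    have h2 : (μ + R'.sum).im = μ.im + (R'.sum).im := by simp
    rw [h2] at h0
    have h3 : (R'.map Complex.imAddGroupHom).sum = (R'.map Complex.im).sum := rfl
    rw [h1, h3] at h0
    linarith
  have hIm : 5 * |μ.im| ≤ 4 * s := by
    have key : (R'.map (fun ν => μ.im + (-1) * ν.im)).sum = 5 * μ.im := by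
      rw [Multiset.sum_map_add, Multiset.map_const', Multiset.sum_replicate, hcard',
        Multiset.sum_map_mul_left]
      have : (R'.map (fun ν => ν.im)).sum = -μ.im := hImsum
      rw [this]
      simp
      ring
    have habs1 : |(R'.map (fun ν => μ.im + (-1) * ν.im)).sum|
        ≤ ((R'.map (fun ν => μ.im + (-1) * ν.im)).map abs).sum :=
      Multiset.abs_sum_le_sum_abs
    rw [key, Multiset.map_map] at habs1
    have habs2 : ((R'.map (abs ∘ fun ν => μ.im + (-1) * ν.im))).sum ≤ (R'.map (fun _ => s)).sum := by
      apply Multiset.sum_map_le_sum_map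
      intro ν hν
      have hνR : ν ∈ R := by rw [hR'] at hν; exact Multiset.mem_of_mem_erase hν
      have : μ.im + (-1) * ν.im = (μ - ν).im := by simp [Complex.sub_im]; ring
      rw [Function.comp_apply, this]
      exact le_trans (Complex.abs_im_le_norm (μ - ν)) (hs_el ν hνR)
    have habs3 : (R'.map (fun _ => s)).sum = 4 * s := by
      rw [Multiset.map_const', Multiset.sum_replicate, hcard']
      simp
    calc 5 * |μ.im| = |5 * μ.im| := by rw [abs_mul]; simp
      _ ≤ 4 * s := by rw [← habs3]; exact le_trans habs1 habs2
  -- coordinates of μ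
  have hcd : μ.re ^ 2 + μ.im ^ 2 = 1 := by
    have h1 := Complex.sq_norm μ
    rw [habs] at h1
    rw [Complex.normSq_apply] at h1
    nlinarith [h1]
  have hc1 : μ.re ≤ 1 := by nlinarith [sq_nonneg μ.im, sq_nonneg (μ.re - 1)]
  have hReW' : 5 * (μ.re ^ 2 - μ.im ^ 2) - 2 * t * μ.re + q ≤ 4 * s ^ 2 := by
    have hcomp : (5 * μ ^ 2 - 2 * (t : ℂ) * μ + (q : ℂ)).re
        = 5 * (μ.re ^ 2 - μ.im ^ 2) - 2 * t * μ.re + q := by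
      simp [Complex.mul_re, Complex.add_re, Complex.sub_re, pow_two,
        Complex.ofReal_re, Complex.ofReal_im]
    rw [hcomp] at hReW
    exact hReW
  have hd2 : 25 * μ.im ^ 2 ≤ 16 * s ^ 2 := by
    nlinarith [hIm, abs_nonneg μ.im, sq_abs μ.im]
  have hs2 : 5 / 52 ≤ s ^ 2 := by
    linarith [hqt, hReW', hcd, hd2, mul_nonneg ht0 (sub_nonneg.mpr hc1), sq_nonneg (t - 4)]
  -- conclude
  have hsqrt : (8.6 : ℝ) ≤ Real.sqrt 74 := by
    have h86 : (8.6 : ℝ) = Real.sqrt (8.6 ^ 2) := (Real.sqrt_sq (by norm_num)).symm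
    rw [h86]
    exact Real.sqrt_le_sqrt (by norm_num)
  have hpos : (0 : ℝ) < 8 + Real.sqrt 74 := by positivity
  have hstep : 5 / (8 + Real.sqrt 74) ≤ 5 / 16.6 := by
    rw [div_le_div_iff₀ hpos (by norm_num)]
    nlinarith [hsqrt]
  have hfin : 5 / 16.6 ≤ s := by nlinarith [hs2, hs0]
  linarith [hstep, hfin]
end

section
/- Let A be a 4×4 real matrix with nonnegative entries, spectral radius r(A) = 1, and a_{11} = 0. Then the spread of A satisfies s(A) ≥ 1/3. -/
open Matrix Polynomial

private lemma det_fin_four' {R : Type*} [CommRing R] (A : Matrix (Fin 4) (Fin 4) R) :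
    A.det =
      A 0 0*A 1 1*A 2 2*A 3 3 - A 0 0*A 1 1*A 2 3*A 3 2 - A 0 0*A 1 2*A 2 1*A 3 3 + A 0 0*A 1 2*A 2 3*A 3 1 + A 0 0*A 1 3*A 2 1*A 3 2 - A 0 0*A 1 3*A 2 2*A 3 1 - A 0 1*A 1 0*A 2 2*A 3 3 + A 0 1*A 1 0*A 2 3*A 3 2 + A 0 1*A 1 2*A 2 0*A 3 3 - A 0 1*A 1 2*A 2 3*A 3 0 - A 0 1*A 1 3*A 2 0*A 3 2 + A 0 1*A 1 3*A 2 2*A 3 0 + A 0 2*A 1 0*A 2 1*A 3 3 - A 0 2*A 1 0*A 2 3*A 3 1 - A 0 2*A 1 1*A 2 0*A 3 3 + A 0 2*A 1 1*A 2 3*A 3 0 + A 0 2*A 1 3*A 2 0*A 3 1 - A 0 2*A 1 3*A 2 1*A 3 0 - A 0 3*A 1 0*A 2 1*A 3 2 + A 0 3*A 1 0*A 2 2*A 3 1 + A 0 3*A 1 1*A 2 0*A 3 2 - A 0 3*A 1 1*A 2 2*A 3 0 - A 0 3*A 1 2*A 2 0*A 3 1 + A 0 3*A 1 2*A 2 1*A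 3 0 := by
  rw [Matrix.det_succ_row_zero, Fin.sum_univ_four]
  norm_num [Matrix.det_fin_three, Matrix.submatrix_apply, Fin.succAbove, Fin.lt_def,
    Fin.coe_castSucc, Fin.val_succ,
    show (Fin.succ 2 : Fin 4) = 3 from rfl, show ((3:Fin 4):ℕ) = 3 from rfl,
    show ((2:Fin 4):ℕ) = 2 from rfl, show ((1:Fin 4):ℕ) = 1 from rfl,
    show (Fin.castSucc 2 : Fin 4) = 2 from rfl]
  ring

set_option maxHeartbeats 1000000 in
theorem spread_ge_four_by_four (A : Matrix (Fin 4) (Fin 4) ℝ)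
    (hA : ∀ i j, 0 ≤ A i j) (hr : specRad A = 1) (h11 : A 0 0 = 0) :
    (1 : ℝ) / 3 ≤ spread A := by
  by_contra hcon
  push_neg at hcon
  set B := A.map Complex.ofReal with hB
  have hmon : B.charpoly.Monic := B.charpoly_monic
  have hsplit : B.charpoly.Splits := IsAlgClosed.splits _
  have hdeg : B.charpoly.natDegree = 4 := by
    simpa using B.charpoly_natDegree_eq_dim
  have heigs : B.charpoly.roots = eigs A := rfl
  have hcard : Multiset.card (eigs A) = 4 := by
    have h := Polynomial.splits_iff_card_roots.mp hsplit
    rw [hdeg, heigs] at h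
    exact h
  have hfin : {μ : ℂ | μ ∈ eigs A}.Finite := (eigs A).finite_toSet
  -- spectral radius is attained
  have hSne : ∃ μ, μ ∈ eigs A := by
    rw [← Multiset.card_pos_iff_exists_mem, hcard]; norm_num
  obtain ⟨μ₁, hμ₁⟩ := hSne
  have hmem : (1:ℝ) ∈ {r : ℝ | ∃ μ ∈ eigs A, r = ‖μ‖} := by
    rw [← hr]
    refine Set.Nonempty.csSup_mem ⟨_, ⟨μ₁, hμ₁, rfl⟩⟩ ?_
    have : {r : ℝ | ∃ μ ∈ eigs A, r = ‖μ‖}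
        = (fun μ => ‖μ‖) '' {μ | μ ∈ eigs A} := by
      ext r; simp [eq_comm]
    rw [this]; exact hfin.image _
  obtain ⟨ρ, hρmem, hρabs⟩ := hmem
  -- spread is an upper bound
  have hTfin : {r : ℝ | ∃ μ ∈ eigs A, ∃ ν ∈ eigs A, r = ‖μ - ν‖}.Finite := by
    have : {r : ℝ | ∃ μ ∈ eigs A, ∃ ν ∈ eigs A, r = ‖μ - ν‖} =
        Set.image2 (fun μ ν => ‖μ - ν‖) {μ | μ ∈ eigs A} {μ | μ ∈ eigs A} := by
      ext r; simp [Set.mem_image2, eq_comm]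
    rw [this]; exact hfin.image2 _ hfin
  have hub : ∀ μ ∈ eigs A, ∀ ν ∈ eigs A, ‖μ - ν‖ ≤ spread A := by
    intro μ hμ ν hν
    exact le_csSup hTfin.bddAbove ⟨μ, hμ, ν, hν, rfl⟩
  set s := spread A with hs
  -- decompose the multiset of eigenvalues
  obtain ⟨rest, hrest⟩ := Multiset.exists_cons_of_mem hρmem
  have hcard3 : Multiset.card rest = 3 := by
    have h := hcard
    rw [hrest] at h
    simpa using h
  obtain ⟨a, b, c, rfl⟩ := Multiset.card_eq_three.mp hcard3
  have ha : a ∈ eigs A := by rw [hrest]; simp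
  have hb : b ∈ eigs A := by rw [hrest]; simp
  have hc : c ∈ eigs A := by rw [hrest]; simp
  have hroots : B.charpoly.roots = ρ ::ₘ {a, b, c} := by rw [heigs, hrest]
  -- trace identity
  set t : ℝ := A 1 1 + A 2 2 + A 3 3 with ht
  have htB : B.trace = (t : ℂ) := by
    simp only [hB, Matrix.trace, Matrix.diag, Fin.sum_univ_four, Matrix.map_apply, h11, ht]
    push_cast
    ring
  have h1 : ρ + a + b + c = (t : ℂ) := by
    have h := Matrix.trace_eq_sum_roots_charpoly B
    rw [htB, hroots] at h
    simp only [Multiset.insert_eq_cons, Multiset.sum_cons, Multiset.sum_singleton] at h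
    linear_combination h.symm
  -- determinant identity
  have hdB : B.det = ((A.det : ℝ) : ℂ) := by
    have h : B = Complex.ofRealHom.mapMatrix A := rfl
    rw [h]
    exact (RingHom.map_det _ _).symm
  have h4 : ρ * a * b * c = ((A.det : ℝ) : ℂ) := by
    have h := Matrix.det_eq_prod_roots_charpoly B
    rw [hdB, hroots] at h
    simp only [Multiset.insert_eq_cons, Multiset.prod_cons, Multiset.prod_singleton] at h
    linear_combination h.symm
  -- evaluation of the characteristic polynomial
  have hev : ∀ x : ℝ, B.charpoly.eval (x:ℂ) = (((Matrix.scalar (Fin 4) x - A).det : ℝ) : ℂ) := by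
    intro x
    rw [Matrix.charpoly, _root_.eval_det, Matrix.matPolyEquiv_charmatrix, Polynomial.eval_sub,
      Polynomial.eval_X, Polynomial.eval_C]
    have h : Matrix.scalar (Fin 4) (x:ℂ) - B
        = (Matrix.scalar (Fin 4) x - A).map Complex.ofRealHom := by
      ext i j
      by_cases h : i = j <;>
        simp [h, hB, Matrix.scalar_apply, Matrix.diagonal_apply, Matrix.map_apply]
    rw [h]
    exact (RingHom.map_det Complex.ofRealHom _).symm
  have hprod : B.charpoly = ((ρ ::ₘ {a, b, c}).map (fun z => X - C z)).prod := by
    rw [← hroots]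
    exact hsplit.eq_prod_roots_of_monic hmon
  have h2 : (1 - ρ) * (1 - a) * (1 - b) * (1 - c)
      = (((Matrix.scalar (Fin 4) (1:ℝ) - A).det : ℝ) : ℂ) := by
    have h := hev 1
    rw [hprod] at h
    simp only [Multiset.insert_eq_cons, Multiset.map_cons, Multiset.prod_cons,
      Multiset.map_singleton, Multiset.prod_singleton, Polynomial.eval_mul, Polynomial.eval_sub,
      Polynomial.eval_X, Polynomial.eval_C, Complex.ofReal_one] at h
    linear_combination h
  have h3 : (-1 - ρ) * (-1 - a) * (-1 - b) * (-1 - c)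
      = (((Matrix.scalar (Fin 4) (-1:ℝ) - A).det : ℝ) : ℂ) := by
    have h := hev (-1)
    rw [hprod] at h
    simp only [Multiset.insert_eq_cons, Multiset.map_cons, Multiset.prod_cons,
      Multiset.map_singleton, Multiset.prod_singleton, Polynomial.eval_mul, Polynomial.eval_sub,
      Polynomial.eval_X, Polynomial.eval_C, Complex.ofReal_neg, Complex.ofReal_one] at h
    linear_combination h
  -- the purely algebraic identity relating the dets to trace (A*A)
  have hreal : t^2 - (Matrix.scalar (Fin 4) (1:ℝ) - A).det - (Matrix.scalar (Fin 4) (-1:ℝ) - A).det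
      + 2 + 2 * A.det = (A*A).trace := by
    rw [det_fin_four', det_fin_four', det_fin_four']
    simp only [Matrix.sub_apply, Matrix.scalar_apply, Matrix.diagonal_apply,
      Matrix.trace, Matrix.diag, Fin.sum_univ_four, Matrix.mul_apply, ht]
    norm_num [Fin.ext_iff, h11, show ((3:Fin 4):ℕ) = 3 from rfl, show ((2:Fin 4):ℕ) = 2 from rfl,
      show ((1:Fin 4):ℕ) = 1 from rfl, show ((0:Fin 4):ℕ) = 0 from rfl]
    ring
  set m : ℝ := (A*A).trace with hm
  have hrealC : ((t:ℂ))^2 - (((Matrix.scalar (Fin 4) (1:ℝ) - A).det : ℝ) : ℂ)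
      - (((Matrix.scalar (Fin 4) (-1:ℝ) - A).det : ℝ) : ℂ) + 2 + 2 * ((A.det : ℝ) : ℂ)
      = ((m:ℝ):ℂ) := by
    exact_mod_cast congrArg Complex.ofReal hreal
  have hK : ρ^2 + a^2 + b^2 + c^2 = ((m:ℝ):ℂ) := by
    linear_combination (ρ + a + b + c + (t:ℂ)) * h1 - h2 - h3 + 2*h4 + hrealC
  -- key complex identity
  have hE : ((4*m - t^2 : ℝ) : ℂ)
      = -((a + b + c - 3*ρ)^2) + 4*((a - ρ)^2 + (b - ρ)^2 + (c - ρ)^2) := by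
    push_cast
    linear_combination (-4)*hK + (ρ + a + b + c + (t:ℂ)) * h1
  -- real bounds
  set u := ‖a - ρ‖ with hu'
  set v := ‖b - ρ‖ with hv'
  set w := ‖c - ρ‖ with hw'
  have hu : u ≤ s := hub a ha ρ hρmem
  have hv : v ≤ s := hub b hb ρ hρmem
  have hw : w ≤ s := hub c hc ρ hρmem
  have hu0 : 0 ≤ u := norm_nonneg _
  have hv0 : 0 ≤ v := norm_nonneg _
  have hw0 : 0 ≤ w := norm_nonneg _
  have hs0 : 0 ≤ s := le_trans hu0 hu
  have ht0 : 0 ≤ t := by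
    have := hA 1 1; have := hA 2 2; have := hA 3 3
    rw [ht]; linarith
  -- |D| ≤ u+v+w
  have hD : ‖a + b + c - 3*ρ‖ ≤ u + v + w := by
    have h : a + b + c - 3*ρ = (a - ρ) + ((b - ρ) + (c - ρ)) := by ring
    rw [h]
    refine (norm_add_le _ _).trans ?_
    have := norm_add_le (b - ρ) (c - ρ)
    rw [hu', hv', hw']
    linarith
  -- t ≥ 4 - 3 s
  have htge : 4 - (u + v + w) ≤ t := by
    have h40 : (4:ℝ) = ‖(t:ℂ) - (a + b + c - 3*ρ)‖ := by
      rw [show (t:ℂ) - (a + b + c - 3*ρ) = 4*ρ by linear_combination -h1]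
      rw [norm_mul, ← hρabs]
      norm_num
    have htri : ‖(t:ℂ) - (a + b + c - 3*ρ)‖
        ≤ ‖(t:ℂ)‖ + ‖a + b + c - 3*ρ‖ := by
      rw [sub_eq_add_neg]
      refine (norm_add_le _ _).trans ?_
      rw [norm_neg]
    have habst : ‖(t:ℂ)‖ = t := by
      rw [Complex.norm_real, Real.norm_of_nonneg ht0]
    rw [← h40, habst] at htri
    linarith
  -- upper bound on 4m - t²
  have hup : 4*m - t^2 ≤ (u + v + w)^2 + 4*(u^2 + v^2 + w^2) := by
    have hre : 4*m - t^2 = (((4*m - t^2 : ℝ) : ℂ)).re := (Complex.ofReal_re _).symm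
    rw [hre, hE]
    have hb1 : (-((a + b + c - 3*ρ)^2) + 4*((a - ρ)^2 + (b - ρ)^2 + (c - ρ)^2)).re
        = -(((a + b + c - 3*ρ)^2).re) + 4*(((a - ρ)^2).re + ((b - ρ)^2).re + ((c - ρ)^2).re) := by
      simp [Complex.add_re, Complex.neg_re, Complex.mul_re]
    rw [hb1]
    have e1 : -(((a + b + c - 3*ρ)^2).re) ≤ (u + v + w)^2 := by
      have h0 := Complex.abs_re_le_norm ((a + b + c - 3*ρ)^2)
      have h0' := neg_le_abs (((a + b + c - 3*ρ)^2).re)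
      have h2 : ‖(a + b + c - 3*ρ)^2‖ = (‖a + b + c - 3*ρ‖)^2 :=
        norm_pow _ 2
      have h3 : (‖a + b + c - 3*ρ‖)^2 ≤ (u + v + w)^2 := by
        apply pow_le_pow_left₀ (norm_nonneg _) hD
      linarith
    have e2 : ((a - ρ)^2).re ≤ u^2 := by
      have h := Complex.re_le_norm ((a - ρ)^2)
      rw [norm_pow] at h
      exact h
    have e3 : ((b - ρ)^2).re ≤ v^2 := by
      have h := Complex.re_le_norm ((b - ρ)^2)
      rw [norm_pow] at h
      exact h
    have e4 : ((c - ρ)^2).re ≤ w^2 := by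
      have h := Complex.re_le_norm ((c - ρ)^2)
      rw [norm_pow] at h
      exact h
    linarith
  -- lower bound on m
  have hmge : A 1 1^2 + A 2 2^2 + A 3 3^2 ≤ m := by
    rw [hm]
    simp only [Matrix.trace, Matrix.diag, Fin.sum_univ_four, Matrix.mul_apply]
    nlinarith [mul_nonneg (hA 0 1) (hA 1 0), mul_nonneg (hA 0 2) (hA 2 0),
      mul_nonneg (hA 0 3) (hA 3 0), mul_nonneg (hA 1 2) (hA 2 1),
      mul_nonneg (hA 1 3) (hA 3 1), mul_nonneg (hA 2 3) (hA 3 2),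
      sq_nonneg (A 0 0)]
  have hmge' : t^2 ≤ 3*m := by
    rw [ht]
    nlinarith [sq_nonneg (A 1 1 - A 2 2), sq_nonneg (A 1 1 - A 3 3), sq_nonneg (A 2 2 - A 3 3)]
  -- final contradiction
  have htge' : 4 - 3*s ≤ t := by linarith
  have hquad : 4*m ≤ t^2 + 21*s^2 := by nlinarith
  nlinarith [mul_nonneg hs0 (by linarith : (0:ℝ) ≤ 1/3 - s),
    mul_nonneg (by linarith : (0:ℝ) ≤ t - (4 - 3*s)) (by linarith : (0:ℝ) ≤ t + (4 - 3*s))]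
end

section
/- Let A be a 2×2 real matrix with nonnegative entries, spectral radius r(A) = 1, and a_{11} = 0. Then the spread of A satisfies s(A) ≥ 1. -/
open Matrix Polynomial

lemma charpoly_two (M : Matrix (Fin 2) (Fin 2) ℂ) :
    M.charpoly = (X - C (M 0 0)) * (X - C (M 1 1)) - C (M 0 1) * C (M 1 0) := by
  rw [Matrix.charpoly, Matrix.det_fin_two, charmatrix_apply_eq, charmatrix_apply_eq,
    charmatrix_apply_ne _ _ _ (by decide), charmatrix_apply_ne _ _ _ (by decide)]
  ring

theorem spread_ge_two_by_two (A : Matrix (Fin 2) (Fin 2) ℝ)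
    (hA : ∀ i j, 0 ≤ A i j) (hr : specRad A = 1) (h11 : A 0 0 = 0) :
    1 ≤ spread A := by
  set t : ℝ := A 1 1 with ht
  set c : ℝ := A 0 1 * A 1 0 with hc
  have hc0 : 0 ≤ c := mul_nonneg (hA 0 1) (hA 1 0)
  have ht0 : 0 ≤ t := hA 1 1
  set s : ℝ := Real.sqrt (t ^ 2 + 4 * c) with hs
  have hs0 : 0 ≤ s := Real.sqrt_nonneg _
  have hssq : s ^ 2 = t ^ 2 + 4 * c := Real.sq_sqrt (by positivity)
  have hts : t ≤ s := by nlinarith [hssq, hs0, ht0, hc0]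
  set r1 : ℝ := (t + s) / 2 with hr1
  set r2 : ℝ := (t - s) / 2 with hr2
  have hr1nn : 0 ≤ r1 := by positivity
  have hr2np : r2 ≤ 0 := by simp only [hr2]; linarith
  -- eigenvalues
  have e1 : ((t : ℝ) : ℂ) = (r1 : ℂ) + (r2 : ℂ) := by
    simp only [hr1, hr2]; push_cast; ring
  have e2r : c = -(r1 * r2) := by simp only [hr1, hr2]; nlinarith [hssq]
  have e2 : ((c : ℝ) : ℂ) = -((r1 : ℂ) * (r2 : ℂ)) := by
    rw [e2r]; push_cast; ring
  have heigs : eigs A = {(r1 : ℂ), (r2 : ℂ)} := by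
    have hfact : (A.map Complex.ofReal).charpoly
        = (X - C (r1 : ℂ)) * (X - C (r2 : ℂ)) := by
      rw [charpoly_two]
      simp only [Matrix.map_apply, h11]
      rw [← C_mul, ← Complex.ofReal_mul, ← hc, ← ht, e1, e2]
      simp only [Complex.ofReal_zero, map_zero, map_add, map_neg, _root_.map_mul]
      ring
    rw [eigs, hfact, Polynomial.roots_mul
        (mul_ne_zero (X_sub_C_ne_zero _) (X_sub_C_ne_zero _)),
      Polynomial.roots_X_sub_C, Polynomial.roots_X_sub_C]
    rfl
  have hmem_iff : ∀ μ : ℂ, μ ∈ eigs A ↔ μ = (r1 : ℂ) ∨ μ = (r2 : ℂ) := by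
    intro μ
    rw [heigs]
    exact ⟨fun h => by
      rcases Multiset.mem_cons.mp h with h' | h'
      · exact Or.inl h'
      · exact Or.inr (Multiset.mem_singleton.mp h'),
      fun h => by
        rcases h with rfl | rfl
        · exact Multiset.mem_cons_self _ _
        · exact Multiset.mem_cons_of_mem (Multiset.mem_singleton_self _)⟩
  -- specRad
  have hset1 : {r : ℝ | ∃ μ ∈ eigs A, r = ‖μ‖} = {|r1|, |r2|} := by
    ext r
    constructor
    · rintro ⟨μ, hμ, rfl⟩
      rcases (hmem_iff μ).mp hμ with rfl | rfl
      · left; simp [Complex.norm_real]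
      · right; simp [Complex.norm_real]
    · rintro (rfl | rfl)
      · exact ⟨(r1 : ℂ), (hmem_iff _).mpr (Or.inl rfl), by simp [Complex.norm_real]⟩
      · exact ⟨(r2 : ℂ), (hmem_iff _).mpr (Or.inr rfl), by simp [Complex.norm_real]⟩
  have hspec : specRad A = max |r1| |r2| := by rw [specRad, hset1, csSup_pair]
  have hmax : max |r1| |r2| = r1 := by
    rw [abs_of_nonneg hr1nn, abs_of_nonpos hr2np, max_eq_left]
    simp only [hr1, hr2]; linarith
  have hr1one : r1 = 1 := by rw [hspec, hmax] at hr; exact hr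
  -- spread
  have hd0 : 0 ≤ r1 - r2 := by linarith
  have hmem : r1 - r2 ∈ {r : ℝ | ∃ μ ∈ eigs A, ∃ ν ∈ eigs A, r = ‖μ - ν‖} := by
    refine ⟨(r1 : ℂ), (hmem_iff _).mpr (Or.inl rfl), (r2 : ℂ),
      (hmem_iff _).mpr (Or.inr rfl), ?_⟩
    rw [← Complex.ofReal_sub, Complex.norm_real, Real.norm_eq_abs, abs_of_nonneg hd0]
  have hbdd : BddAbove {r : ℝ | ∃ μ ∈ eigs A, ∃ ν ∈ eigs A, r = ‖μ - ν‖} := by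
    refine ⟨r1 - r2, ?_⟩
    rintro r ⟨μ, hμ, ν, hν, rfl⟩
    rcases (hmem_iff μ).mp hμ with rfl | rfl <;> rcases (hmem_iff ν).mp hν with rfl | rfl <;>
      simp only [sub_self, map_zero, norm_zero, ← Complex.ofReal_sub, Complex.ofReal_zero, Complex.norm_real, Real.norm_eq_abs]
    · exact hd0
    · rw [abs_of_nonneg hd0]
    · rw [abs_sub_comm, abs_of_nonneg hd0]
    · exact hd0
  have h1 : r1 - r2 ≤ spread A := le_csSup hbdd hmem
  rw [hr1one] at h1
  linarith
end

section
/- Let A be a 3×3 real matrix with nonnegative entries, spectral radius r(A) = 1, and a_{11} = 0. Then the spread of A satisfies s(A) ≥ 3/4. -/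
open Matrix Polynomial

private lemma lemC (x y r : ℝ) (hy : y ≠ 0) (hz1 : x^2+y^2 ≤ 1) (hr1 : |r| ≤ 1)
    (hone : x^2+y^2 = 1 ∨ r = 1 ∨ r = -1)
    (hT : 0 ≤ r + 2*x) (hQ : x^2+y^2+2*(r*x) ≤ (r+2*x)^2/4) :
    (3/4:ℝ)^2 ≤ (2*y)^2 ∨ (3/4:ℝ)^2 ≤ (r-x)^2+y^2 := by
  by_contra h
  push_neg at h
  obtain ⟨h1, h2⟩ := h
  rw [abs_le] at hr1
  have hy2 : 0 < y^2 := by positivity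
  rcases hone with h3|h3|h3
  · rcases le_or_gt x 0 with hx|hx
    · nlinarith [mul_nonneg (show (0:ℝ) ≤ r - 2*x by linarith) (show (0:ℝ) ≤ r by linarith)]
    · rcases le_or_gt r 0 with hr|hr
      · nlinarith [mul_nonneg (show (0:ℝ) ≤ -r by linarith) (show (0:ℝ) ≤ 2*x - r by linarith)]
      · have hx2 : 7/16 < x^2 := by nlinarith [sq_nonneg (r - x)]
        have hx4 : 1/4 < x := by nlinarith
        nlinarith [mul_pos hr (show (0:ℝ) < 4*x - 1 by linarith),
          mul_nonneg hr.le (show (0:ℝ) ≤ 1 - r by linarith)]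
  · subst h3
    nlinarith [sq_nonneg (y^2), mul_pos hy2 hy2]
  · subst h3
    nlinarith

private lemma pair_main (a c : ℂ) (T Q : ℝ) (hy : a.im ≠ 0) (hcim : c.im = 0)
    (ha1 : ‖a‖ ≤ 1) (hc1 : ‖c‖ ≤ 1)
    (hone : ‖a‖ = 1 ∨ ‖c‖ = 1)
    (hE1 : a + (starRingEnd ℂ) a + c = (T:ℂ))
    (hE2 : a * (starRingEnd ℂ) a + a*c + (starRingEnd ℂ) a * c = (Q:ℂ))
    (hTnn : 0 ≤ T) (hQle : Q ≤ T^2/4) :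
    3/4 ≤ ‖a - (starRingEnd ℂ) a‖ ∨ 3/4 ≤ ‖c - a‖ := by
  have hc : c = ((c.re : ℝ) : ℂ) := Complex.ext rfl (by simp [hcim])
  have hsq : ‖a‖ ^ 2 = a.re^2 + a.im^2 := by
    rw [Complex.sq_norm, Complex.normSq_apply]; ring
  have hz1 : a.re^2 + a.im^2 ≤ 1 := by nlinarith [norm_nonneg a]
  have hr1 : |c.re| ≤ 1 := by
    have := hc1; rw [hc, Complex.norm_real, Real.norm_eq_abs] at this; exact this
  have hT' : c.re + 2*a.re = T := by
    have h := congrArg Complex.re hE1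
    simp [Complex.add_re, Complex.conj_re] at h
    linarith
  have hQ' : a.re^2 + a.im^2 + 2*(c.re * a.re) = Q := by
    have h := congrArg Complex.re hE2
    simp [Complex.add_re, Complex.mul_re, Complex.conj_re, Complex.conj_im, hcim] at h
    nlinarith [h]
  have honed : a.re^2 + a.im^2 = 1 ∨ c.re = 1 ∨ c.re = -1 := by
    rcases hone with h|h
    · left; rw [← hsq, h]; norm_num
    · right
      rw [hc, Complex.norm_real, Real.norm_eq_abs] at h
      rcases abs_eq (by norm_num : (0:ℝ) ≤ 1) |>.mp h with h|h
      · exact Or.inl h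
      · exact Or.inr h
  rcases lemC a.re a.im c.re hy hz1 hr1 honed (by linarith) (by rw [hQ', hT']; exact hQle)
      with h|h
  · left
    have habs : ‖a - (starRingEnd ℂ) a‖ ^ 2 = (2*a.im)^2 := by
      rw [Complex.sq_norm, Complex.normSq_apply]
      simp [Complex.sub_re, Complex.sub_im, Complex.conj_re, Complex.conj_im]
      ring
    nlinarith [norm_nonneg (a - (starRingEnd ℂ) a)]
  · right
    have habs : ‖c - a‖ ^ 2 = (c.re - a.re)^2 + a.im^2 := by
      rw [Complex.sq_norm, Complex.normSq_apply]
      simp [Complex.sub_re, Complex.sub_im, hcim]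
      ring
    nlinarith [norm_nonneg (c - a)]

private lemma help1 (v w : ℝ) (hv : 1/4 < v) (hw : 1/4 < w) (hv1 : v ≤ 1) (hw1 : w ≤ 1)
    (hQ : v + w + v*w ≤ (1+v+w)^2/4) : False := by
  nlinarith [mul_pos (show (0:ℝ) < v - 1/4 by linarith) (show (0:ℝ) < w - 1/4 by linarith),
    mul_pos (show (0:ℝ) < v + w - 1/2 by linarith) (show (0:ℝ) < 5/2 - (v+w) by linarith)]

private lemma real_main (u v w : ℝ) (hu : |u| ≤ 1) (hv : |v| ≤ 1) (hw : |w| ≤ 1)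
    (hone : |u| = 1 ∨ |v| = 1 ∨ |w| = 1)
    (hT : 0 ≤ u+v+w) (hQ : u*v+u*w+v*w ≤ (u+v+w)^2/4) :
    3/4 ≤ |u-v| ∨ 3/4 ≤ |u-w| ∨ 3/4 ≤ |v-w| := by
  by_contra h
  push_neg at h
  obtain ⟨h1, h2, h3⟩ := h
  rw [abs_le] at hu hv hw
  rw [abs_lt] at h1 h2 h3
  have done1 : ∀ v w : ℝ, v ≤ 1 → w ≤ 1 → v*1+v*w+1*w ≤ (v+1+w)^2/4 →
      1/4 < v → 1/4 < w → False := by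
    intro v w hv1 hw1 hQ hv hw
    apply help1 v w hv hw hv1 hw1
    nlinarith [hQ]
  rcases hone with h4|h4|h4 <;> rcases abs_eq (by norm_num : (0:ℝ) ≤ 1) |>.mp h4 with h5|h5 <;>
      subst h5
  · exact done1 v w hv.2 hw.2 (by nlinarith [hQ]) (by linarith) (by linarith)
  · linarith
  · exact done1 u w hu.2 hw.2 (by nlinarith [hQ]) (by linarith) (by linarith)
  · linarith
  · exact done1 u v hu.2 hv.2 (by nlinarith [hQ]) (by linarith) (by linarith)
  · linarith

private lemma abs_of_real_im_eq_zero (z : ℂ) (hz : z.im = 0) : ‖z‖ = |z.re| := by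
  rw [← Real.norm_eq_abs, ← Complex.norm_real]
  congr 1
  exact Complex.ext rfl (by simp [hz])

theorem spread_ge_three_by_three (A : Matrix (Fin 3) (Fin 3) ℝ)
    (hA : ∀ i j, 0 ≤ A i j) (hr : specRad A = 1) (h11 : A 0 0 = 0) :
    (3 : ℝ) / 4 ≤ spread A := by
  classical
  set Ac := A.map Complex.ofReal with hAc
  set p := Ac.charpoly with hp
  have hmonic : p.Monic := Matrix.charpoly_monic Ac
  have hp0 : p ≠ 0 := hmonic.ne_zero
  have hdeg : p.natDegree = 3 := by
    rw [hp, Matrix.charpoly_natDegree_eq_dim]; simp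
  have hsplits : p.Splits := IsAlgClosed.splits p
  have hcard : p.roots.card = 3 := by
    rw [(Polynomial.splits_iff_card_roots).mp hsplits, hdeg]
  obtain ⟨a, b, c, habc⟩ := Multiset.card_eq_three.mp hcard
  have heigs : eigs A = ({a, b, c} : Multiset ℂ) := habc
  have hmemiff : ∀ z : ℂ, z ∈ eigs A ↔ z = a ∨ z = b ∨ z = c := by
    intro z
    rw [heigs]
    simp only [Multiset.insert_eq_cons, Multiset.mem_cons, Multiset.mem_singleton]
  have hamem : a ∈ eigs A := (hmemiff a).mpr (Or.inl rfl)
  have hbmem : b ∈ eigs A := (hmemiff b).mpr (Or.inr (Or.inl rfl))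
  have hcmem : c ∈ eigs A := (hmemiff c).mpr (Or.inr (Or.inr rfl))
  -- factorization and symmetric functions
  have hfact : p = (X - C a) * ((X - C b) * (X - C c)) := by
    have h := hsplits.eq_prod_roots_of_monic hmonic
    rw [habc] at h
    simpa [mul_assoc] using h
  have hpe : ∀ z : ℂ, eval z p = (z - a) * ((z - b) * (z - c)) := by
    intro z; rw [hfact]; simp
  have hev : ∀ z : ℂ, eval z p = ((charmatrix Ac).map (eval z)).det := by
    intro z
    rw [hp, Matrix.charpoly, ← Polynomial.coe_evalRingHom, RingHom.map_det]
    rfl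
  have hprod : ∀ z : ℂ, (z - a) * ((z - b) * (z - c)) =
      (z - (A 0 0 : ℝ)) * ((z - (A 1 1 : ℝ)) * (z - (A 2 2 : ℝ)) - (A 1 2 : ℝ) * (A 2 1 : ℝ))
      - (A 0 1 : ℝ) * ((A 1 0 : ℝ) * (z - (A 2 2 : ℝ)) + (A 1 2 : ℝ) * (A 2 0 : ℝ))
      - (A 0 2 : ℝ) * ((A 1 0 : ℝ) * (A 2 1 : ℝ) + (A 2 0 : ℝ) * (z - (A 1 1 : ℝ))) := by
    intro z
    rw [← hpe z, hev z, Matrix.det_fin_three]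
    simp [Matrix.charmatrix_apply, Matrix.map_apply, Matrix.diagonal_apply, hAc]
    ring
  have hE1 : a + b + c = ((A 0 0 + A 1 1 + A 2 2 : ℝ) : ℂ) := by
    have h1 := hprod 1
    have h0 := hprod 0
    have hm := hprod (-1)
    push_cast
    linear_combination (-(1:ℂ)/2) * h1 - (1/2 : ℂ) * hm + h0
  have hE2 : a*b + a*c + b*c = ((A 0 0 * A 1 1 + A 0 0 * A 2 2 + A 1 1 * A 2 2
      - A 0 1 * A 1 0 - A 0 2 * A 2 0 - A 1 2 * A 2 1 : ℝ) : ℂ) := by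
    have h1 := hprod 1
    have hm := hprod (-1)
    push_cast
    linear_combination ((1:ℂ)/2) * h1 - (1/2 : ℂ) * hm
  set T : ℝ := A 0 0 + A 1 1 + A 2 2 with hTdef
  set Q : ℝ := A 0 0 * A 1 1 + A 0 0 * A 2 2 + A 1 1 * A 2 2
      - A 0 1 * A 1 0 - A 0 2 * A 2 0 - A 1 2 * A 2 1 with hQdef
  have hTnn : 0 ≤ T := by
    rw [hTdef]; linarith [hA 0 0, hA 1 1, hA 2 2]
  have hQle : Q ≤ T^2/4 := by
    rw [hTdef, hQdef]
    nlinarith [mul_nonneg (hA 0 1) (hA 1 0), mul_nonneg (hA 0 2) (hA 2 0),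
      mul_nonneg (hA 1 2) (hA 2 1), sq_nonneg (A 1 1 - A 2 2), h11]
  -- conjugation invariance
  have hconj : ∀ z ∈ eigs A, (starRingEnd ℂ) z ∈ eigs A := by
    intro z hz
    have hpq : (A.map Complex.ofReal).charpoly = (A.charpoly).map Complex.ofRealHom := by
      rw [← Matrix.charpoly_map]
      rfl
    have hp0' : (A.map Complex.ofReal).charpoly ≠ 0 := (Matrix.charpoly_monic _).ne_zero
    rw [eigs, Polynomial.mem_roots'] at hz ⊢
    obtain ⟨-, hz2⟩ := hz
    refine ⟨hp0', ?_⟩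
    have key : (starRingEnd ℂ) (eval z ((A.map Complex.ofReal).charpoly))
        = eval ((starRingEnd ℂ) z) ((A.map Complex.ofReal).charpoly) := by
      rw [hpq, Polynomial.eval_map, Polynomial.eval_map, Polynomial.hom_eval₂]
      congr 1
      ext r
      simp
    rw [IsRoot.def, ← key, hz2, map_zero]
  -- spectral radius facts
  have hSfin : {r : ℝ | ∃ μ ∈ eigs A, r = ‖μ‖}.Finite := by
    have : {r : ℝ | ∃ μ ∈ eigs A, r = ‖μ‖}
        = (fun z : ℂ => ‖z‖) '' {x | x ∈ eigs A} := by
      ext t; simp [eq_comm]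
    rw [this]
    exact ((eigs A).finite_toSet).image _
  have hle : ∀ μ ∈ eigs A, ‖μ‖ ≤ 1 := by
    intro μ hμ
    have : ‖μ‖ ≤ specRad A := le_csSup hSfin.bddAbove ⟨μ, hμ, rfl⟩
    rwa [hr] at this
  have hone : ∃ μ ∈ eigs A, ‖μ‖ = 1 := by
    have hSne : {r : ℝ | ∃ μ ∈ eigs A, r = ‖μ‖}.Nonempty := ⟨_, a, hamem, rfl⟩
    have := hSne.csSup_mem hSfin
    rw [show sSup {r : ℝ | ∃ μ ∈ eigs A, r = ‖μ‖} = specRad A from rfl, hr] at this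
    obtain ⟨μ, hμ, h⟩ := this
    exact ⟨μ, hμ, h.symm⟩
  -- main case analysis
  have main : ∃ μ ∈ eigs A, ∃ ν ∈ eigs A, 3/4 ≤ ‖μ - ν‖ := by
    by_cases ha' : a.im = 0
    · by_cases hb' : b.im = 0
      · by_cases hc' : c.im = 0
        · -- all real
          have hE1r : a.re + b.re + c.re = T := by
            have h := congrArg Complex.re hE1
            simpa using h
          have hE2r : a.re*b.re + a.re*c.re + b.re*c.re = Q := by
            have h := congrArg Complex.re hE2
            simp [Complex.add_re, Complex.mul_re, ha', hb', hc'] at h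
            linarith
          have habs : ‖a‖ = |a.re| := abs_of_real_im_eq_zero a ha'
          have hbabs : ‖b‖ = |b.re| := abs_of_real_im_eq_zero b hb'
          have hcabs : ‖c‖ = |c.re| := abs_of_real_im_eq_zero c hc'
          have honer : |a.re| = 1 ∨ |b.re| = 1 ∨ |c.re| = 1 := by
            obtain ⟨μ, hμ, h1⟩ := hone
            rcases (hmemiff μ).mp hμ with h|h|h <;> subst h
            · exact Or.inl (habs ▸ h1)
            · exact Or.inr (Or.inl (hbabs ▸ h1))
            · exact Or.inr (Or.inr (hcabs ▸ h1))
          have := real_main a.re b.re c.re (habs ▸ hle a hamem) (hbabs ▸ hle b hbmem)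
            (hcabs ▸ hle c hcmem) honer (by linarith) (by rw [hE2r, hE1r]; exact hQle)
          rcases this with h|h|h
          · refine ⟨a, hamem, b, hbmem, ?_⟩
            rw [abs_of_real_im_eq_zero (a - b) (by simp [ha', hb']), Complex.sub_re]
            exact h
          · refine ⟨a, hamem, c, hcmem, ?_⟩
            rw [abs_of_real_im_eq_zero (a - c) (by simp [ha', hc']), Complex.sub_re]
            exact h
          · refine ⟨b, hbmem, c, hcmem, ?_⟩
            rw [abs_of_real_im_eq_zero (b - c) (by simp [hb', hc']), Complex.sub_re]
            exact h
        · -- c nonreal, a b real : impossible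
          exfalso
          rcases (hmemiff _).mp (hconj c hcmem) with h|h|h
          · have h2 := congrArg Complex.im h
            simp [Complex.conj_im, ha'] at h2
            exact hc' h2
          · have h2 := congrArg Complex.im h
            simp [Complex.conj_im, hb'] at h2
            exact hc' h2
          · rw [Complex.conj_eq_iff_im] at h
            exact hc' h
      · -- b nonreal, a real: must have conj b = c
        rcases (hmemiff _).mp (hconj b hbmem) with h|h|h
        · exfalso
          have h2 := congrArg Complex.im h
          simp [Complex.conj_im, ha'] at h2
          exact hb' h2
        · exfalso
          rw [Complex.conj_eq_iff_im] at h
          exact hb' h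
        · have hcb : c = (starRingEnd ℂ) b := h.symm
          have honep : ‖b‖ = 1 ∨ ‖a‖ = 1 := by
            obtain ⟨μ, hμ, h1⟩ := hone
            rcases (hmemiff μ).mp hμ with hh|hh|hh <;> subst hh
            · exact Or.inr h1
            · exact Or.inl h1
            · left; rw [hcb, Complex.norm_conj] at h1; exact h1
          have hE1' : b + (starRingEnd ℂ) b + a = (T:ℂ) := by
            have hh := hE1; rw [hcb] at hh; linear_combination hh
          have hE2' : b * (starRingEnd ℂ) b + b*a + (starRingEnd ℂ) b * a = (Q:ℂ) := by
            have hh := hE2; rw [hcb] at hh; linear_combination hh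
          rcases pair_main b a T Q hb' ha' (hle b hbmem) (hle a hamem) honep hE1' hE2'
              hTnn hQle with hh|hh
          · exact ⟨b, hbmem, c, hcmem, by rw [hcb]; exact hh⟩
          · exact ⟨a, hamem, b, hbmem, hh⟩
    · -- a nonreal
      rcases (hmemiff _).mp (hconj a hamem) with h|h|h
      · exfalso
        rw [Complex.conj_eq_iff_im] at h
        exact ha' h
      · -- b = conj a
        have hb2 : b = (starRingEnd ℂ) a := h.symm
        have hcim : c.im = 0 := by
          have h2 := congrArg Complex.im hE1
          simp [hb2, Complex.add_im, Complex.conj_im] at h2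
          linarith
        have honep : ‖a‖ = 1 ∨ ‖c‖ = 1 := by
          obtain ⟨μ, hμ, h1⟩ := hone
          rcases (hmemiff μ).mp hμ with hh|hh|hh <;> subst hh
          · exact Or.inl h1
          · left; rw [hb2, Complex.norm_conj] at h1; exact h1
          · exact Or.inr h1
        have hE1' : a + (starRingEnd ℂ) a + c = (T:ℂ) := by
          have hh := hE1; rw [hb2] at hh; exact hh
        have hE2' : a * (starRingEnd ℂ) a + a*c + (starRingEnd ℂ) a * c = (Q:ℂ) := by
          have hh := hE2; rw [hb2] at hh; exact hh
        rcases pair_main a c T Q ha' hcim (hle a hamem) (hle c hcmem) honep hE1' hE2'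
            hTnn hQle with hh|hh
        · exact ⟨a, hamem, b, hbmem, by rw [hb2]; exact hh⟩
        · exact ⟨c, hcmem, a, hamem, hh⟩
      · -- c = conj a
        have hc2 : c = (starRingEnd ℂ) a := h.symm
        have hbim : b.im = 0 := by
          have h2 := congrArg Complex.im hE1
          simp [hc2, Complex.add_im, Complex.conj_im] at h2
          linarith
        have honep : ‖a‖ = 1 ∨ ‖b‖ = 1 := by
          obtain ⟨μ, hμ, h1⟩ := hone
          rcases (hmemiff μ).mp hμ with hh|hh|hh <;> subst hh
          · exact Or.inl h1
          · exact Or.inr h1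
          · left; rw [hc2, Complex.norm_conj] at h1; exact h1
        have hE1' : a + (starRingEnd ℂ) a + b = (T:ℂ) := by
          have hh := hE1; rw [hc2] at hh; linear_combination hh
        have hE2' : a * (starRingEnd ℂ) a + a*b + (starRingEnd ℂ) a * b = (Q:ℂ) := by
          have hh := hE2; rw [hc2] at hh; linear_combination hh
        rcases pair_main a b T Q ha' hbim (hle a hamem) (hle b hbmem) honep hE1' hE2'
            hTnn hQle with hh|hh
        · exact ⟨a, hamem, c, hcmem, by rw [hc2]; exact hh⟩
        · exact ⟨b, hbmem, a, hamem, hh⟩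
  -- conclude
  obtain ⟨μ, hμ, ν, hν, hge⟩ := main
  have hS2fin : {r : ℝ | ∃ μ ∈ eigs A, ∃ ν ∈ eigs A, r = ‖μ - ν‖}.Finite := by
    have : {r : ℝ | ∃ μ ∈ eigs A, ∃ ν ∈ eigs A, r = ‖μ - ν‖}
        = Set.image2 (fun μ ν : ℂ => ‖μ - ν‖) {x | x ∈ eigs A} {x | x ∈ eigs A} := by
      ext t; simp [eq_comm]
    rw [this]
    exact Set.Finite.image2 _ ((eigs A).finite_toSet) ((eigs A).finite_toSet)
  exact le_trans hge (le_csSup hS2fin.bddAbove ⟨μ, hμ, ν, hν, rfl⟩)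
end

section
/- The 3×3 real matrix A = (1/4)·[[0,2,0],[0,3,1],[2,0,3]] has characteristic polynomial (X − 1)(X − 1/4)² over ℂ; in particular A is nonnegative, a_{11} = 0, its spectral radius is r(A) = 1, and its spread is s(A) = 3/4. -/
open Matrix Polynomial

theorem example_three_by_three (A : Matrix (Fin 3) (Fin 3) ℝ)
    (hA : A = (1 / 4 : ℝ) • !![0, 2, 0; 0, 3, 1; 2, 0, 3]) :
    (A.map Complex.ofReal).charpoly = (X - C 1) * (X - C (1 / 4)) ^ 2 ∧
    (∀ i j, 0 ≤ A i j) ∧ A 0 0 = 0 ∧ specRad A = 1 ∧ spread A = 3 / 4 := by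
  have hcp : (A.map Complex.ofReal).charpoly = (X - C 1) * (X - C (1 / 4)) ^ 2 := by
    subst hA
    rw [Matrix.charpoly, Matrix.det_fin_three]
    apply Polynomial.funext
    intro x
    simp [charmatrix_apply, Matrix.smul_apply, Matrix.map_apply]
    ring
  have heigs : eigs A = {1, 1/4, 1/4} := by
    rw [eigs, hcp, roots_mul (mul_ne_zero (X_sub_C_ne_zero 1)
        (pow_ne_zero _ (X_sub_C_ne_zero _))),
      roots_pow, roots_X_sub_C, roots_X_sub_C]
    rfl
  have habs1 : ‖(1 - 4⁻¹ : ℂ)‖ = 3 / 4 := by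
    rw [show ((1 : ℂ) - 4⁻¹) = ((3 / 4 : ℝ) : ℂ) by norm_num, Complex.norm_real, Real.norm_eq_abs]
    norm_num
  have habs2 : ‖(4⁻¹ - 1 : ℂ)‖ = 3 / 4 := by
    rw [show ((4⁻¹ : ℂ) - 1) = ((-(3 / 4) : ℝ) : ℂ) by norm_num, Complex.norm_real, Real.norm_eq_abs]
    norm_num
  have habs3 : ‖(4⁻¹ : ℂ)‖ = 1 / 4 := by
    rw [show ((4⁻¹ : ℂ)) = ((1 / 4 : ℝ) : ℂ) by norm_num, Complex.norm_real, Real.norm_eq_abs]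
    norm_num
  refine ⟨hcp, ?_, ?_, ?_, ?_⟩
  · intro i j
    subst hA
    fin_cases i <;> fin_cases j <;> norm_num
  · subst hA; norm_num
  · have hs : {r : ℝ | ∃ μ ∈ eigs A, r = ‖μ‖} = {1, 1/4} := by
      ext r
      simp only [Set.mem_setOf_eq, Set.mem_insert_iff, Set.mem_singleton_iff]
      rw [show (∃ μ ∈ eigs A, r = ‖μ‖) ↔ (r = 1 ∨ r = 1/4) by
        simp [heigs, habs3]]
    rw [specRad, hs, csSup_pair]
    norm_num
  · have hs : {r : ℝ | ∃ μ ∈ eigs A, ∃ ν ∈ eigs A, r = ‖μ - ν‖}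
        = {0, 3/4} := by
      ext r
      simp only [Set.mem_setOf_eq, Set.mem_insert_iff, Set.mem_singleton_iff]
      rw [show (∃ μ ∈ eigs A, ∃ ν ∈ eigs A, r = ‖μ - ν‖)
          ↔ (r = 0 ∨ r = 3/4) by simp [heigs, habs1, habs2]; tauto]
    rw [spread, hs, csSup_pair]
    norm_num
end

section
/- Fix n ≥ 2. Define n×n real matrices: A with entries a_{i,i+1} = n−i for 1 ≤ i ≤ n−1, a_{i,i} = n for 2 ≤ i ≤ n, a_{i,j} = 2 whenever i − j is an even positive integer, and all other entries zero; U upper triangular with u_{1,1} = 2(n−1), u_{i,i} = n−2 for 2 ≤ i ≤ n, u_{i,i+1} = n−i for 1 ≤ i ≤ n−1, and all other entries zero; and S lower triangular with s_{i,i} = 1 for all i, s_{i,j} = 2 for i > j, and all other entries zero. Then S is invertible and S·U = A·S; in particular A is similar to U. -/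
open Matrix Polynomial

private lemma count_even_gap (n i j : ℕ) (hi : i ≤ n) :
    ((Finset.range n).filter (fun k => j < k ∧ k < i ∧ Even (i - k))).card
      = (i - j - 1) / 2 := by
  rcases le_or_gt i j with h | h
  · have h0 : i - j - 1 = 0 := by omega
    rw [h0, Nat.zero_div, Finset.card_eq_zero, Finset.filter_eq_empty_iff]
    rintro k _ ⟨h1, h2, _⟩
    omega
  · rw [← Nat.Ioc_filter_dvd_card_eq_div (i - j - 1) 2]
    apply Finset.card_nbij' (fun k => i - k) (fun s => i - s)
    · intro k hk
      simp only [Finset.mem_coe, Finset.mem_filter, Finset.mem_range, Finset.mem_Ioc, Nat.even_iff] at *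
      omega
    · intro s hs
      simp only [Finset.mem_coe, Finset.mem_filter, Finset.mem_range, Finset.mem_Ioc, Nat.even_iff] at *
      omega
    · intro k hk
      simp only [Finset.mem_coe, Finset.mem_filter, Finset.mem_range] at hk
      dsimp only
      omega
    · intro s hs
      simp only [Finset.mem_coe, Finset.mem_filter, Finset.mem_Ioc] at hs
      dsimp only
      omega

set_option maxHeartbeats 2000000 in
private lemma key_sum (n i j : ℕ) (hn : 2 ≤ n) (hi : i < n) (hj : j < n) :
    (∑ k ∈ Finset.range n,
      (if i = k then (1:ℝ) else if k < i then 2 else 0) *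
      (if j = k + 1 then (n:ℝ) - (k + 1)
        else if k = j then (if k = 0 then 2 * ((n:ℝ) - 1) else (n:ℝ) - 2) else 0))
    = ∑ k ∈ Finset.range n,
      (if k = i + 1 then (n:ℝ) - (i + 1)
        else if i = k ∧ 1 ≤ i then (n:ℝ)
        else if k < i ∧ Even (i - k) then 2 else 0) *
      (if k = j then (1:ℝ) else if j < k then 2 else 0) := by
  classical
  set sv : ℕ → ℕ → ℝ := fun a b => if a = b then 1 else if b < a then 2 else 0 with hsv
  -- LHS
  have hL : (∑ k ∈ Finset.range n,
      (if i = k then (1:ℝ) else if k < i then 2 else 0) *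
      (if j = k + 1 then (n:ℝ) - (k + 1)
        else if k = j then (if k = 0 then 2 * ((n:ℝ) - 1) else (n:ℝ) - 2) else 0))
      = (if 1 ≤ j then sv i (j-1) * ((n:ℝ) - j) else 0)
        + sv i j * (if j = 0 then 2 * ((n:ℝ) - 1) else (n:ℝ) - 2) := by
    have hsplit : ∀ k ∈ Finset.range n,
        (if i = k then (1:ℝ) else if k < i then 2 else 0) *
        (if j = k + 1 then (n:ℝ) - (k + 1)
          else if k = j then (if k = 0 then 2 * ((n:ℝ) - 1) else (n:ℝ) - 2) else 0)
        = (if j = k + 1 then sv i k * ((n:ℝ) - (k + 1)) else 0)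
          + (if k = j then sv i k * (if k = 0 then 2 * ((n:ℝ) - 1) else (n:ℝ) - 2) else 0) := by
      intro k _
      simp only [hsv]
      split_ifs <;> first | ring1 | omega | (exfalso; omega)
    rw [Finset.sum_congr rfl hsplit, Finset.sum_add_distrib]
    congr 1
    · rcases j with _ | m
      · simp
      · have h1 : ∀ k, (Nat.succ m = k + 1) ↔ (k = m) := by intro k; omega
        simp only [h1]
        rw [Finset.sum_ite_eq' (Finset.range n) m (fun k => sv i k * ((n:ℝ) - (k+1)))]
        have hm : m ∈ Finset.range n := by simp; omega
        rw [if_pos hm, if_pos (by omega)]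
        norm_num
    · rw [Finset.sum_ite_eq' (Finset.range n) j
        (fun k => sv i k * (if k = 0 then 2 * ((n:ℝ) - 1) else (n:ℝ) - 2))]
      rw [if_pos (by simp [hj])]
  -- RHS
  have hR : (∑ k ∈ Finset.range n,
      (if k = i + 1 then (n:ℝ) - (i + 1)
        else if i = k ∧ 1 ≤ i then (n:ℝ)
        else if k < i ∧ Even (i - k) then 2 else 0) *
      (if k = j then (1:ℝ) else if j < k then 2 else 0))
      = ((n:ℝ) - (i + 1)) * sv (i+1) j
        + (if 1 ≤ i then (n:ℝ) * sv i j else 0)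
        + ((if j < i ∧ Even (i - j) then (2:ℝ) else 0)
            + 4 * (((i - j - 1) / 2 : ℕ) : ℝ)) := by
    have hsplit : ∀ k ∈ Finset.range n,
        (if k = i + 1 then (n:ℝ) - (i + 1)
          else if i = k ∧ 1 ≤ i then (n:ℝ)
          else if k < i ∧ Even (i - k) then 2 else 0) *
        (if k = j then (1:ℝ) else if j < k then 2 else 0)
        = (if k = i + 1 then ((n:ℝ) - (i + 1)) * sv k j else 0)
          + (if k = i then (if 1 ≤ i then (n:ℝ) * sv k j else 0) else 0)
          + ((if k = j then (if j < i ∧ Even (i - j) then (2:ℝ) else 0) else 0)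
              + (if j < k ∧ k < i ∧ Even (i - k) then (4:ℝ) else 0)) := by
      intro k _
      simp only [hsv]
      split_ifs <;> first | ring1 | omega | simp_all | (exfalso; omega)
    rw [Finset.sum_congr rfl hsplit]
    rw [Finset.sum_add_distrib, Finset.sum_add_distrib, Finset.sum_add_distrib]
    congr 1
    · congr 1
      · -- k = i+1 term
        rw [Finset.sum_ite_eq' (Finset.range n) (i+1) (fun k => ((n:ℝ) - (i + 1)) * sv k j)]
        rcases lt_or_ge (i+1) n with h | h
        · rw [if_pos (by simpa using h)]
        · rw [if_neg (by simp; omega)]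
          have : (n:ℝ) - (i+1) = 0 := by
            have : i + 1 = n := by omega
            rw [← this]; push_cast; ring
          rw [this, zero_mul]
      · rw [Finset.sum_ite_eq' (Finset.range n) i
          (fun k => (if 1 ≤ i then (n:ℝ) * sv k j else 0))]
        rw [if_pos (by simpa using hi)]
    · congr 1
      · rw [Finset.sum_ite_eq' (Finset.range n) j
          (fun _ => (if j < i ∧ Even (i - j) then (2:ℝ) else 0))]
        rw [if_pos (by simpa using hj)]
      · rw [← Finset.sum_filter, Finset.sum_const, nsmul_eq_mul,
          count_even_gap n i j (le_of_lt hi)]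
        ring
  rw [hL, hR]
  clear hL hR
  -- now a pure scalar identity
  rcases lt_trichotomy j i with hlt | heq | hgt
  · -- j < i
    have hcast : ((i - j : ℕ) : ℝ) = (i : ℝ) - j := by
      push_cast [Nat.cast_sub (le_of_lt hlt)]; ring
    have h1 : sv (i+1) j = 2 := by simp only [hsv]; rw [if_neg (by omega), if_pos (by omega)]
    have h2 : sv i j = 2 := by simp only [hsv]; rw [if_neg (by omega), if_pos (by omega)]
    have hcond : (j < i ∧ Even (i - j)) ↔ Even (i - j) :=
      ⟨fun h => h.2, fun h => ⟨hlt, h⟩⟩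
    rw [h1, h2, if_pos (show 1 ≤ i by omega)]
    simp only [hcond]
    have hq' : (4:ℝ) * (((i - j - 1) / 2 : ℕ) : ℝ)
        + (if Even (i - j) then (2:ℝ) else 0) + 2 = 2 * ((i:ℝ) - j) := by
      rcases Nat.even_or_odd (i - j) with he | ho
      · rw [if_pos he]
        have he' := Nat.even_iff.mp he
        have hq : (4 * ((i - j - 1) / 2) + 4 : ℕ) = 2 * (i - j) := by omega
        have := congrArg (fun m : ℕ => (m:ℝ)) hq
        push_cast at this
        rw [hcast] at this
        linarith
      · rw [if_neg (Nat.not_even_iff_odd.mpr ho)]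
        have ho' := Nat.odd_iff.mp ho
        have hq : (4 * ((i - j - 1) / 2) + 2 : ℕ) = 2 * (i - j) := by omega
        have := congrArg (fun m : ℕ => (m:ℝ)) hq
        push_cast at this
        rw [hcast] at this
        linarith
    rcases Nat.eq_zero_or_pos j with hj0 | hj1
    · subst hj0
      rw [if_neg (show ¬ (1 ≤ (0:ℕ)) by omega), if_pos rfl]
      push_cast at hq' ⊢
      linarith
    · rw [if_pos (show 1 ≤ j from hj1), if_neg (show ¬ j = 0 by omega)]
      have h3 : sv i (j-1) = 2 := by simp only [hsv]; rw [if_neg (by omega), if_pos (by omega)]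
      rw [h3]
      push_cast at hq' ⊢
      linarith
  · -- j = i
    subst heq
    have hij0 : j - j = 0 := by omega
    have h1 : sv (j+1) j = 2 := by simp only [hsv]; rw [if_neg (by omega), if_pos (by omega)]
    have h2 : sv j j = 1 := by simp [hsv]
    rw [h1, h2, if_neg (show ¬ (j < j ∧ Even (j - j)) by omega), hij0]
    rcases Nat.eq_zero_or_pos j with hj0 | hj1
    · subst hj0
      rw [if_neg (show ¬ (1 ≤ (0:ℕ)) by omega), if_pos rfl,
        if_neg (show ¬ (1 ≤ (0:ℕ)) by omega)]
      norm_num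
      try ring
    · rw [if_pos (show 1 ≤ j from hj1), if_neg (show ¬ j = 0 by omega),
        if_pos (show 1 ≤ j from hj1)]
      have h3 : sv j (j-1) = 2 := by simp only [hsv]; rw [if_neg (by omega), if_pos (by omega)]
      rw [h3]
      norm_num
      try push_cast
      try ring
  · -- i < j
    have hij0 : i - j = 0 := by omega
    have h2 : sv i j = 0 := by simp only [hsv]; rw [if_neg (by omega), if_neg (by omega)]
    rw [h2, if_neg (show ¬ (j < i ∧ Even (i - j)) by omega), hij0]
    rcases eq_or_lt_of_le (show i + 1 ≤ j by omega) with hj1 | hj2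
    · -- j = i + 1
      have h1 : sv (i+1) j = 1 := by simp only [hsv]; rw [if_pos hj1]
      rw [h1, if_pos (show 1 ≤ j by omega)]
      have h3 : sv i (j-1) = 1 := by simp only [hsv]; rw [if_pos (by omega)]
      rw [h3]
      have hjr : ((j:ℝ)) = (i:ℝ) + 1 := by rw [← hj1]; push_cast; ring
      rw [hjr]
      norm_num
      try (split_ifs <;> ring)
    · -- i + 1 < j
      have h1 : sv (i+1) j = 0 := by simp only [hsv]; rw [if_neg (by omega), if_neg (by omega)]
      rw [h1, if_pos (show 1 ≤ j by omega)]
      have h3 : sv i (j-1) = 0 := by simp only [hsv]; rw [if_neg (by omega), if_neg (by omega)]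
      rw [h3]
      norm_num
      try (split_ifs <;> ring)

set_option maxHeartbeats 1000000 in
theorem similar_to_upper_triangular (n : ℕ) (hn : 2 ≤ n)
    (A U S : Matrix (Fin n) (Fin n) ℝ)
    (hA : A = Matrix.of fun (i j : Fin n) =>
      if (j : ℕ) = (i : ℕ) + 1 then (n : ℝ) - ((i : ℕ) + 1)
      else if i = j ∧ 1 ≤ (i : ℕ) then (n : ℝ)
      else if (j : ℕ) < (i : ℕ) ∧ Even ((i : ℕ) - (j : ℕ)) then 2
      else 0)
    (hU : U = Matrix.of fun (i j : Fin n) =>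
      if (j : ℕ) = (i : ℕ) + 1 then (n : ℝ) - ((i : ℕ) + 1)
      else if i = j then (if (i : ℕ) = 0 then 2 * ((n : ℝ) - 1) else (n : ℝ) - 2)
      else 0)
    (hS : S = Matrix.of fun (i j : Fin n) =>
      if i = j then 1 else if (j : ℕ) < (i : ℕ) then 2 else 0) :
    IsUnit S ∧ S * U = A * S := by
  constructor
  · -- S is lower triangular with unit diagonal
    rw [Matrix.isUnit_iff_isUnit_det]
    have hdet : S.det = 1 := by
      have htri : ∀ i j : Fin n, i < j → S i j = 0 := by
        intro i j hij
        rw [hS]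
        simp only [Matrix.of_apply]
        rw [if_neg (by intro h; subst h; exact lt_irrefl _ hij),
          if_neg (by simp only [Fin.lt_def] at hij; omega)]
      rw [Matrix.det_of_lowerTriangular S (fun i j hij => htri i j hij)]
      rw [hS]
      simp
    rw [hdet]
    exact isUnit_one
  · ext i j
    rw [hA, hU, hS]
    simp only [Matrix.mul_apply, Matrix.of_apply]
    have heq : ∀ (a b : Fin n), (a = b) ↔ ((a : ℕ) = (b : ℕ)) := fun a b => Fin.ext_iff
    simp only [heq]
    rw [Fin.sum_univ_eq_sum_range (fun k =>
      (if (i:ℕ) = k then (1:ℝ) else if k < (i:ℕ) then 2 else 0) *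
      (if (j:ℕ) = k + 1 then (n:ℝ) - (k + 1)
        else if k = (j:ℕ) then (if k = 0 then 2 * ((n:ℝ) - 1) else (n:ℝ) - 2) else 0))]
    rw [Fin.sum_univ_eq_sum_range (fun k =>
      (if k = (i:ℕ) + 1 then (n:ℝ) - ((i:ℕ) + 1)
        else if (i:ℕ) = k ∧ 1 ≤ (i:ℕ) then (n:ℝ)
        else if k < (i:ℕ) ∧ Even ((i:ℕ) - k) then 2 else 0) *
      (if k = (j:ℕ) then (1:ℝ) else if (j:ℕ) < k then 2 else 0))]
    exact key_sum n i j hn i.isLt j.isLt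
end
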